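/- arXiv:1703.10578 — 9 statements merged into one kernel-verified Lean document; each statement's English description precedes it below -/
import Mathlib

section
/- Let N ≥ 1, let ν_1 > ν_2 > … > ν_N be real numbers, let m and c be complex numbers, and let R > max_j |ν_j|. Then (1/(2πi)) ∮_{|z|=R} (∏_{j=1}^N (1 + m/(z − ν_j))) · e^{cz} dz = Σ_{j=1}^N m · e^{c ν_j} · ∏_{i ≠ j} (ν_j + m − ν_i)/(ν_j − ν_i), where the contour integral is over the positively oriented circle of radius R centred at 0. -/
open scoped BigOperators
open Finset Polynomial

lemma poly_key {N : ℕ} (v : Fin N → ℂ) (hv : Function.Injective v) (m z : ℂ) :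
    (∏ j, (z - v j + m)) = (∏ j, (z - v j)) +
      ∑ j, (m * ∏ i ∈ Finset.univ.erase j, (v j + m - v i)) *
        ∏ i ∈ Finset.univ.erase j, ((v j - v i)⁻¹ * (z - v i)) := by
  classical
  set p : Polynomial ℂ := ∏ j, (X - C (v j - m)) with hp
  set q : Polynomial ℂ := ∏ j, (X - C (v j)) with hq
  have hpm : p.Monic := monic_prod_of_monic _ _ fun j _ => monic_X_sub_C _
  have hqm : q.Monic := monic_prod_of_monic _ _ fun j _ => monic_X_sub_C _
  have hdp : p.degree = N := by
    rw [hp, degree_prod]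
    have h1 : ∀ j : Fin N, (X - C (v j - m)).degree = 1 := fun j => degree_X_sub_C _
    rw [Finset.sum_congr rfl fun j _ => h1 j]
    simp
  have hdq : q.degree = N := by
    rw [hq, degree_prod]
    have h1 : ∀ j : Fin N, (X - C (v j)).degree = 1 := fun j => degree_X_sub_C _
    rw [Finset.sum_congr rfl fun j _ => h1 j]
    simp
  have hdeg : (p - q).degree < ((Finset.univ : Finset (Fin N)).card : WithBot ℕ) := by
    rw [Finset.card_univ, Fintype.card_fin]
    calc (p - q).degree < p.degree :=
          degree_sub_lt (hdp.trans hdq.symm) hpm.ne_zero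
            (hpm.leadingCoeff.trans hqm.leadingCoeff.symm)
      _ = N := hdp
  have hinj : Set.InjOn v (Finset.univ : Finset (Fin N)) := hv.injOn
  have hf := Lagrange.eq_interpolate hinj hdeg
  have heval : ∀ i : Fin N, (p - q).eval (v i)
      = m * ∏ j ∈ Finset.univ.erase i, (v i + m - v j) := by
    intro i
    have hq0 : q.eval (v i) = 0 := by
      rw [hq, eval_prod]
      exact Finset.prod_eq_zero (Finset.mem_univ i) (by simp)
    have hp0 : p.eval (v i) = m * ∏ j ∈ Finset.univ.erase i, (v i + m - v j) := by
      rw [hp, eval_prod]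
      simp only [eval_sub, eval_X, eval_C]
      rw [← Finset.mul_prod_erase _ _ (Finset.mem_univ i),
        show v i - (v i - m) = m by ring]
      congr 1
      exact Finset.prod_congr rfl fun j _ => by ring
    simp [hp0, hq0]
  have h2 := congrArg (Polynomial.eval z) hf
  rw [Lagrange.interpolate_apply, eval_finset_sum] at h2
  simp only [eval_mul, eval_C] at h2
  have hL : (p - q).eval z = (∏ j, (z - v j + m)) - ∏ j, (z - v j) := by
    rw [eval_sub, hp, hq, eval_prod, eval_prod]
    simp only [eval_sub, eval_X, eval_C]
    congr 1
    exact Finset.prod_congr rfl fun j _ => by ring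
  rw [hL] at h2
  rw [sub_eq_iff_eq_add'] at h2
  rw [h2]
  congr 1
  refine Finset.sum_congr rfl fun i _ => ?_
  rw [heval i]
  congr 1
  unfold Lagrange.basis Lagrange.basisDivisor
  rw [eval_prod]
  exact Finset.prod_congr rfl fun j _ => by simp

lemma frac_key {N : ℕ} (v : Fin N → ℂ) (hv : Function.Injective v) (m z : ℂ)
    (hz : ∀ j, z ≠ v j) :
    (∏ j, (1 + m / (z - v j))) =
      1 + ∑ j, (m * ∏ i ∈ Finset.univ.erase j, ((v j + m - v i) / (v j - v i))) * (z - v j)⁻¹ := by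
  classical
  have hzj : ∀ j, z - v j ≠ 0 := fun j => sub_ne_zero.2 (hz j)
  have hvij : ∀ j, ∀ i ∈ Finset.univ.erase j, v j - v i ≠ 0 := by
    intro j i hi
    exact sub_ne_zero.2 fun h => (Finset.mem_erase.1 hi).1 (hv h).symm
  have h1 : (∏ j, (1 + m / (z - v j))) = (∏ j, (z - v j + m)) * (∏ j, (z - v j))⁻¹ := by
    rw [← Finset.prod_inv_distrib, ← Finset.prod_mul_distrib]
    refine Finset.prod_congr rfl fun j _ => ?_
    rw [← div_eq_mul_inv, add_div, div_self (hzj j), add_comm]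
  have hP : (∏ j, (z - v j)) ≠ 0 := Finset.prod_ne_zero_iff.2 fun j _ => hzj j
  rw [h1, poly_key v hv m z, add_mul, mul_inv_cancel₀ hP, Finset.sum_mul]
  congr 1
  refine Finset.sum_congr rfl fun j _ => ?_
  rw [Finset.prod_mul_distrib]
  have hE : (∏ i ∈ Finset.univ.erase j, (z - v i)) * (∏ i, (z - v i))⁻¹ = (z - v j)⁻¹ := by
    rw [← Finset.mul_prod_erase _ _ (Finset.mem_univ j), mul_inv]
    have hPe : (∏ i ∈ Finset.univ.erase j, (z - v i)) ≠ 0 :=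
      Finset.prod_ne_zero_iff.2 fun i _ => hzj i
    field_simp
  calc m * (∏ i ∈ Finset.univ.erase j, (v j + m - v i)) *
        ((∏ i ∈ Finset.univ.erase j, (v j - v i)⁻¹) * ∏ i ∈ Finset.univ.erase j, (z - v i)) *
        (∏ i, (z - v i))⁻¹
      = m * ((∏ i ∈ Finset.univ.erase j, (v j + m - v i)) *
          (∏ i ∈ Finset.univ.erase j, (v j - v i)⁻¹)) *
        ((∏ i ∈ Finset.univ.erase j, (z - v i)) * (∏ i, (z - v i))⁻¹) := by ring
    _ = (m * ∏ i ∈ Finset.univ.erase j, ((v j + m - v i) / (v j - v i))) * (z - v j)⁻¹ := by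
        rw [hE, ← Finset.prod_mul_distrib]
        simp only [div_eq_mul_inv]

open Metric in
lemma my_circleIntegral_add {f g : ℂ → ℂ} {c : ℂ} {R : ℝ}
    (hf : CircleIntegrable f c R) (hg : CircleIntegrable g c R) :
    (∮ z in C(c, R), (f z + g z)) = (∮ z in C(c, R), f z) + ∮ z in C(c, R), g z := by
  simp only [circleIntegral, smul_add]
  rw [intervalIntegral.integral_add hf.out hg.out]

lemma my_circleIntegral_sum {ι : Type*} (s : Finset ι) (F : ι → ℂ → ℂ) {c : ℂ} {R : ℝ}
    (h : ∀ i ∈ s, CircleIntegrable (F i) c R) :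
    (∮ z in C(c, R), ∑ i ∈ s, F i z) = ∑ i ∈ s, ∮ z in C(c, R), F i z := by
  simp only [circleIntegral, Finset.smul_sum]
  rw [intervalIntegral.integral_finset_sum fun i hi => (h i hi).out]

open Metric in
/-- Residue evaluation of the contour integral `I_m^a` appearing in the representation of
Wilson loop moments by a discrete β-ensemble. -/
theorem contour_integral_residue_formula
    (N : ℕ) (hN : 1 ≤ N) (ν : Fin N → ℝ) (hν : StrictAnti ν)
    (m c : ℂ) (R : ℝ) (hR : ∀ j, |ν j| < R) :
    (1 / (2 * (Real.pi : ℂ) * Complex.I)) *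
        (∮ z in C(0, R), (∏ j, (1 + m / (z - (ν j : ℂ)))) * Complex.exp (c * z)) =
      ∑ j, m * Complex.exp (c * (ν j : ℂ)) *
        ∏ i ∈ Finset.univ.erase j, (((ν j : ℂ) + m - (ν i : ℂ)) / ((ν j : ℂ) - (ν i : ℂ))) := by
  classical
  set v : Fin N → ℂ := fun j => (ν j : ℂ) with hvdef
  have hv : Function.Injective v := fun a b h =>
    hν.injective (Complex.ofReal_injective h)
  have hR0 : 0 < R := lt_of_le_of_lt (abs_nonneg _) (hR ⟨0, hN⟩)
  set A : Fin N → ℂ := fun j =>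
    m * ∏ i ∈ Finset.univ.erase j, ((v j + m - v i) / (v j - v i)) with hA
  have hnorm : ∀ j, ‖v j‖ = |ν j| := fun j => by
    simp [hvdef, Complex.norm_real]
  have hball : ∀ j, v j ∈ ball (0 : ℂ) R := fun j => by
    rw [mem_ball_zero_iff, hnorm j]; exact hR j
  have hsph : ∀ z ∈ sphere (0 : ℂ) R, ∀ j, z ≠ v j := by
    intro z hz j h
    rw [mem_sphere_iff_norm, sub_zero, h, hnorm j] at hz
    exact absurd hz (ne_of_lt (hR j))
  have hEq : Set.EqOn (fun z => (∏ j, (1 + m / (z - v j))) * Complex.exp (c * z))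
      (fun z => Complex.exp (c * z) + ∑ j, A j * ((z - v j)⁻¹ * Complex.exp (c * z)))
      (sphere (0 : ℂ) R) := by
    intro z hz
    simp only
    rw [frac_key v hv m z (hsph z hz), add_mul, one_mul, Finset.sum_mul]
    congr 1
    exact Finset.sum_congr rfl fun j _ => by rw [hA]; ring
  rw [circleIntegral.integral_congr hR0.le hEq]
  have hIexp : CircleIntegrable (fun z => Complex.exp (c * z)) 0 R :=
    (Complex.continuous_exp.comp (continuous_const.mul continuous_id)).continuousOn.circleIntegrable
      hR0.le
  have hIj : ∀ j ∈ Finset.univ, CircleIntegrable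
      (fun z => A j * ((z - v j)⁻¹ * Complex.exp (c * z))) 0 R := by
    intro j _
    refine ContinuousOn.circleIntegrable hR0.le ?_
    refine continuousOn_const.mul (ContinuousOn.mul ?_
      (Complex.continuous_exp.comp (continuous_const.mul continuous_id)).continuousOn)
    exact (continuousOn_id.sub continuousOn_const).inv₀
      fun z hz => sub_ne_zero.2 (hsph z hz j)
  have hIsum : CircleIntegrable
      (fun z => ∑ j, A j * ((z - v j)⁻¹ * Complex.exp (c * z))) 0 R := by
    refine ContinuousOn.circleIntegrable hR0.le ?_
    refine continuousOn_finset_sum _ fun j _ => ?_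
    refine continuousOn_const.mul (ContinuousOn.mul ?_
      (Complex.continuous_exp.comp (continuous_const.mul continuous_id)).continuousOn)
    exact (continuousOn_id.sub continuousOn_const).inv₀
      fun z hz => sub_ne_zero.2 (hsph z hz j)
  rw [my_circleIntegral_add hIexp hIsum, my_circleIntegral_sum Finset.univ _ hIj]
  have h0 : (∮ z in C(0, R), Complex.exp (c * z)) = 0 :=
    Complex.circleIntegral_eq_zero_of_differentiable_on_off_countable hR0.le Set.countable_empty
      (Complex.continuous_exp.comp (continuous_const.mul continuous_id)).continuousOn
      (fun z _ => (Complex.differentiable_exp.comp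
        ((differentiable_const c).mul differentiable_id)).differentiableAt)
  have hj : ∀ j : Fin N, (∮ z in C(0, R), A j * ((z - v j)⁻¹ * Complex.exp (c * z)))
      = A j * (2 * (Real.pi : ℂ) * Complex.I * Complex.exp (c * v j)) := by
    intro j
    rw [circleIntegral.integral_const_mul]
    have hd : DiffContOnCl ℂ (fun z => Complex.exp (c * z)) (ball (0 : ℂ) R) :=
      (Complex.differentiable_exp.comp
        ((differentiable_const c).mul differentiable_id)).diffContOnCl
    have h2 := hd.circleIntegral_sub_inv_smul (hball j)
    simp only [smul_eq_mul] at h2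
    rw [h2]
  rw [h0, zero_add, Finset.sum_congr rfl fun j _ => hj j, Finset.mul_sum]
  refine Finset.sum_congr rfl fun j _ => ?_
  have hπ : (2 * (Real.pi : ℂ) * Complex.I) ≠ 0 := by
    simp [Real.pi_ne_zero, Complex.I_ne_zero]
  rw [hA]
  have hgen : ∀ X E P : ℂ, X ≠ 0 → 1 / X * (m * P * (X * E)) = m * E * P := by
    intro X E P hX
    field_simp
  exact hgen _ _ _ hπ
end

section
/- For every integer n ≥ 1, every real t, and every R > 0, (1/(2πin)) ∮_{|z|=R} (1 + 1/z)^n · e^{−ntz} dz = Σ_{k=0}^{n−1} ((−t)^k / k!) · C(n, k+1) · n^{k−1}, where C(n, k+1) is the binomial coefficient and the contour integral is over the positively oriented circle of radius R centred at 0. -/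
open scoped BigOperators
open Complex Metric

lemma circleIntegral_finset_sum' {ι : Type*} (s : Finset ι) (f : ι → ℂ → ℂ) (c : ℂ) (R : ℝ)
    (h : ∀ i ∈ s, CircleIntegrable (f i) c R) :
    (∮ z in C(c, R), ∑ i ∈ s, f i z) = ∑ i ∈ s, ∮ z in C(c, R), f i z := by
  simp only [circleIntegral, Finset.smul_sum]
  rw [intervalIntegral.integral_finset_sum]
  intro i hi
  exact (h i hi).out

lemma exp_const_mul_hasFPowerSeriesAt (c : ℂ) :
    HasFPowerSeriesAt (fun z => Complex.exp (c * z))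
      (FormalMultilinearSeries.ofScalars ℂ fun k => c ^ k / (Nat.factorial k : ℂ)) 0 := by
  rw [hasFPowerSeriesAt_iff]
  filter_upwards with z
  have hcoeff : ∀ k, (FormalMultilinearSeries.ofScalars ℂ
      fun k => c ^ k / (Nat.factorial k : ℂ)).coeff k = c ^ k / (Nat.factorial k : ℂ) := by
    intro k
    simp [FormalMultilinearSeries.coeff, FormalMultilinearSeries.ofScalars, Pi.one_def]
  simp only [hcoeff, zero_add, smul_eq_mul]
  have h := NormedSpace.expSeries_div_hasSum_exp (c * z)
  rw [← Complex.exp_eq_exp_ℂ] at h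
  convert h using 1
  · rfl
  funext k
  rw [mul_pow]
  ring

lemma circleIntegral_inv_pow_exp (c : ℂ) {R : ℝ} (hR : 0 < R) (m : ℕ) :
    (∮ z in C(0, R), (z : ℂ)⁻¹ ^ (m + 1) * Complex.exp (c * z)) =
      (2 * Real.pi * Complex.I) * (c ^ m / (Nat.factorial m : ℂ)) := by
  set f : ℂ → ℂ := fun z => Complex.exp (c * z) with hf
  have hd : Differentiable ℂ f := (differentiable_id.const_mul c).cexp
  have hRnn : ((R.toNNReal : ℝ)) = R := Real.coe_toNNReal R hR.le
  have hball : HasFPowerSeriesOnBall f (cauchyPowerSeries f 0 R) 0 R.toNNReal := by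
    have := hd.differentiableOn.hasFPowerSeriesOnBall (R := R.toNNReal) (c := 0)
      (by simpa using hR)
    rwa [hRnn] at this
  have heq : cauchyPowerSeries f 0 R =
      FormalMultilinearSeries.ofScalars ℂ fun k => c ^ k / (Nat.factorial k : ℂ) :=
    hball.hasFPowerSeriesAt.eq_formalMultilinearSeries (exp_const_mul_hasFPowerSeriesAt c)
  have happ := cauchyPowerSeries_apply f 0 R m 1
  rw [heq] at happ
  have hval : (FormalMultilinearSeries.ofScalars ℂ
      (fun k => c ^ k / (Nat.factorial k : ℂ)) m fun _ => (1 : ℂ)) =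
      c ^ m / (Nat.factorial m : ℂ) := by
    simp [FormalMultilinearSeries.ofScalars]
  rw [hval] at happ
  have hint : (∮ z in C(0, R), (1 / (z - 0)) ^ m • (z - 0)⁻¹ • f z) =
      ∮ z in C(0, R), (z : ℂ)⁻¹ ^ (m + 1) * Complex.exp (c * z) := by
    congr 1
    funext z
    simp only [sub_zero, one_div, smul_eq_mul, pow_succ, hf]
    ring
  rw [hint] at happ
  have h2pi : (2 * (Real.pi : ℂ) * Complex.I) ≠ 0 := by
    simp [Real.pi_ne_zero, Complex.I_ne_zero]
  rw [smul_eq_mul] at happ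
  rw [eq_comm, inv_mul_eq_iff_eq_mul₀ h2pi] at happ
  exact happ

/-- Contour-integral formula for the moments of free unitary Brownian motion, arising as the
large-`T` limit of the master field on simple loops. -/
theorem free_unitary_moment_contour_formula
    (n : ℕ) (hn : 1 ≤ n) (t : ℝ) (R : ℝ) (hR : 0 < R) :
    (1 / (2 * (Real.pi : ℂ) * Complex.I * (n : ℂ))) *
        (∮ z in C(0, R), (1 + 1 / z) ^ n * Complex.exp (-(n : ℂ) * (t : ℂ) * z)) =
      ∑ k ∈ Finset.range n, ((-(t : ℂ)) ^ k / (Nat.factorial k : ℂ)) *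
        (Nat.choose n (k + 1) : ℂ) * (n : ℂ) ^ ((k : ℤ) - 1) := by
  set c : ℂ := -(n : ℂ) * (t : ℂ) with hc
  set g : ℕ → ℂ → ℂ := fun j z => (n.choose j : ℂ) * ((z : ℂ)⁻¹ ^ j * Complex.exp (c * z))
    with hg
  have hfun : (fun z : ℂ => (1 + 1 / z) ^ n * Complex.exp (c * z)) =
      fun z => ∑ j ∈ Finset.range (n + 1), g j z := by
    funext z
    rw [add_comm, add_pow, Finset.sum_mul]
    refine Finset.sum_congr rfl fun j hj => ?_
    simp only [one_div, one_pow, mul_one, hg]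
    ring
  have hgint : ∀ j ∈ Finset.range (n + 1), CircleIntegrable (g j) 0 R := by
    intro j _
    refine ContinuousOn.circleIntegrable hR.le ?_
    refine continuousOn_const.mul (ContinuousOn.mul (ContinuousOn.pow ?_ j) ?_)
    · refine ContinuousOn.inv₀ continuousOn_id fun z hz => ?_
      rintro rfl
      simp [mem_sphere_iff_norm, hR.ne'] at hz
      exact hR.ne' hz.symm
    · exact (Complex.continuous_exp.comp (continuous_const.mul continuous_id)).continuousOn
  have hsplit : (∮ z in C(0, R), (1 + 1 / z) ^ n * Complex.exp (c * z)) =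
      ∑ j ∈ Finset.range (n + 1), ∮ z in C(0, R), g j z := by
    rw [show (∮ z in C(0, R), (1 + 1 / z) ^ n * Complex.exp (c * z)) =
        ∮ z in C(0, R), ∑ j ∈ Finset.range (n + 1), g j z from by rw [hfun]]
    exact circleIntegral_finset_sum' _ _ _ _ hgint
  have hzero : (∮ z in C(0, R), g 0 z) = 0 := by
    have : (∮ z in C(0, R), g 0 z) = ∮ z in C(0, R), Complex.exp (c * z) :=
      circleIntegral.integral_congr hR.le fun z _ => by simp [hg]
    rw [this]
    refine circleIntegral_eq_zero_of_differentiable_on_off_countable (s := (∅ : Set ℂ)) hR.le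
      Set.countable_empty ?_ ?_
    · exact (Complex.continuous_exp.comp (continuous_const.mul continuous_id)).continuousOn
    · intro z _
      exact (Complex.differentiable_exp.comp
        ((differentiable_const c).mul differentiable_id)).differentiableAt
  have hterm : ∀ k, (∮ z in C(0, R), g (k + 1) z) =
      (n.choose (k + 1) : ℂ) * ((2 * Real.pi * Complex.I) * (c ^ k / (Nat.factorial k : ℂ))) := by
    intro k
    have : (∮ z in C(0, R), g (k + 1) z) =
        (n.choose (k + 1) : ℂ) * ∮ z in C(0, R), (z : ℂ)⁻¹ ^ (k + 1) * Complex.exp (c * z) := by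
      simp only [hg]
      exact circleIntegral.integral_const_mul (n.choose (k + 1) : ℂ)
        (fun z => (z : ℂ)⁻¹ ^ (k + 1) * Complex.exp (c * z)) 0 R
    rw [this, circleIntegral_inv_pow_exp c hR k]
  rw [hsplit, Finset.sum_range_succ', hzero, add_zero]
  rw [Finset.mul_sum]
  refine Finset.sum_congr rfl fun k hk => ?_
  rw [hterm k]
  have hn0 : (n : ℂ) ≠ 0 := Nat.cast_ne_zero.mpr (by omega)
  have h2pi : (2 * (Real.pi : ℂ) * Complex.I) ≠ 0 := by
    simp [Real.pi_ne_zero, Complex.I_ne_zero]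
  have hnz : ((n : ℂ)) ^ ((k : ℤ) - 1) = (n : ℂ) ^ k / (n : ℂ) := by
    rw [zpow_sub_one₀ hn0, zpow_natCast, div_eq_mul_inv]

  rw [hnz, hc]
  have hfac : (Nat.factorial k : ℂ) ≠ 0 := Nat.cast_ne_zero.mpr (Nat.factorial_ne_zero k)
  field_simp
  ring
end

section
/- For every t > 0 and every real u, ∫_ℝ e^{iux} s_t(x) dx = Σ_{m=0}^∞ (−u² t)^m / (m! · (m+1)!), where the series on the right converges absolutely. -/
open MeasureTheory Real intervalIntegral Finset

/-- The semicircle density of variance `t`. -/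
noncomputable def semicircleDensity (t x : ℝ) : ℝ :=
  if x ^ 2 ≤ 4 * t then Real.sqrt (4 * t - x ^ 2) / (2 * Real.pi * t) else 0

-- Wallis-type closed form
lemma sinS (m : ℕ) :
    ∫ x in (-(π/2))..(π/2), Real.sin x ^ (2*m)
      = π * (2*m).factorial / (4^m * (m.factorial : ℝ) ^ 2) := by
  induction m with
  | zero => simp
  | succ k ih =>
    have h := integral_sin_pow (a := -(π/2)) (b := π/2) (2*k)
    simp only [Real.cos_pi_div_two, Real.cos_neg] at h
    have h2 : 2*(k+1) = 2*k+2 := by ring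
    rw [h2, h, ih]
    have hk : (k.factorial : ℝ) ≠ 0 := Nat.cast_ne_zero.2 k.factorial_ne_zero
    have hk2 : ((2*k).factorial : ℝ) ≠ 0 := Nat.cast_ne_zero.2 (2*k).factorial_ne_zero
    have e1 : (2*k+2).factorial = (2*k+2) * ((2*k+1) * (2*k).factorial) := by
      rw [Nat.factorial_succ, Nat.factorial_succ]
    have e2 : (k+1).factorial = (k+1) * k.factorial := Nat.factorial_succ k
    rw [e1, e2]
    push_cast
    field_simp
    ring


lemma key_subst (t : ℝ) (ht : 0 < t) (n : ℕ) :
    ∫ x in (-(2*Real.sqrt t))..(2*Real.sqrt t), x ^ n * Real.sqrt (4*t - x^2)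
      = (2*Real.sqrt t)^(n+2) * ∫ θ in (-(π/2))..(π/2), Real.sin θ ^ n * Real.cos θ ^ 2 := by
  set r := 2*Real.sqrt t with hrdef
  have hr0 : 0 < r := by positivity
  have hr2 : r^2 = 4*t := by
    rw [hrdef, mul_pow, Real.sq_sqrt ht.le]; ring
  have hg : Continuous fun x : ℝ => x ^ n * Real.sqrt (4*t - x^2) := by fun_prop
  have hderiv : ∀ θ ∈ Set.uIcc (-(π/2)) (π/2),
      HasDerivAt (fun θ : ℝ => r * Real.sin θ) (r * Real.cos θ) θ :=
    fun θ _ => (Real.hasDerivAt_sin θ).const_mul r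
  have hcont : ContinuousOn (fun θ : ℝ => r * Real.cos θ) (Set.uIcc (-(π/2)) (π/2)) := by
    fun_prop
  have := integral_comp_smul_deriv hderiv hcont hg
  simp only [Real.sin_pi_div_two, Real.sin_neg, mul_one, mul_neg] at this
  rw [← this]
  rw [← intervalIntegral.integral_const_mul]
  apply intervalIntegral.integral_congr
  intro θ hθ
  have hθ' : θ ∈ Set.Icc (-(π/2)) (π/2) := by
    rwa [Set.uIcc_of_le (by linarith [Real.pi_pos] : -(π/2) ≤ π/2)] at hθ
  have hcos : 0 ≤ Real.cos θ := Real.cos_nonneg_of_mem_Icc hθ'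
  have hsq : 4*t - (r * Real.sin θ)^2 = (r * Real.cos θ)^2 := by
    have := Real.sin_sq_add_cos_sq θ
    nlinarith [hr2]
  simp only [smul_eq_mul, Function.comp]
  rw [hsq, Real.sqrt_sq (by positivity)]
  ring

lemma moment_even (t : ℝ) (ht : 0 < t) (m : ℕ) :
    ∫ x : ℝ, x ^ (2*m) * semicircleDensity t x
      = t^m * (2*m).factorial / ((m.factorial : ℝ) * (m+1).factorial) := by
  set r := 2*Real.sqrt t with hrdef
  have hr0 : 0 < r := by positivity
  have hr2 : r^2 = 4*t := by
    rw [hrdef, mul_pow, Real.sq_sqrt ht.le]; ring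
  have hiff : ∀ x : ℝ, x^2 ≤ 4*t ↔ x ∈ Set.Icc (-r) r := by
    intro x
    constructor
    · intro h
      constructor
      · by_contra hc; push_neg at hc; nlinarith
      · by_contra hc; push_neg at hc; nlinarith
    · rintro ⟨h1, h2⟩; nlinarith
  have hind : (fun x : ℝ => x ^ (2*m) * semicircleDensity t x)
      = Set.indicator (Set.Icc (-r) r)
          (fun x => x ^ (2*m) * Real.sqrt (4*t - x^2) / (2*π*t)) := by
    funext x
    rw [Set.indicator_apply]
    by_cases h : x ∈ Set.Icc (-r) r
    · rw [if_pos h, semicircleDensity, if_pos ((hiff x).2 h)]; ring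
    · rw [if_neg h, semicircleDensity, if_neg (fun hc => h ((hiff x).1 hc)), mul_zero]
  rw [hind, MeasureTheory.integral_indicator measurableSet_Icc, integral_Icc_eq_integral_Ioc,
    ← intervalIntegral.integral_of_le (by linarith : -r ≤ r)]
  have : (∫ x in (-r)..r, x ^ (2*m) * Real.sqrt (4*t - x^2) / (2*π*t))
      = (∫ x in (-r)..r, x ^ (2*m) * Real.sqrt (4*t - x^2)) / (2*π*t) := by
    rw [intervalIntegral.integral_div]
  rw [this, key_subst t ht (2*m)]
  have hsplit : (∫ θ in (-(π/2))..(π/2), Real.sin θ ^ (2*m) * Real.cos θ ^ 2)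
      = (∫ θ in (-(π/2))..(π/2), Real.sin θ ^ (2*m))
        - ∫ θ in (-(π/2))..(π/2), Real.sin θ ^ (2*(m+1)) := by
    rw [← intervalIntegral.integral_sub (by apply Continuous.intervalIntegrable; fun_prop)
      (by apply Continuous.intervalIntegrable; fun_prop)]
    apply intervalIntegral.integral_congr
    intro θ _
    have h2 : 2*(m+1) = 2*m+2 := by ring
    simp only [h2, Real.cos_sq']
    ring
  rw [hsplit, sinS m, sinS (m+1)]
  have hrp : r^(2*m+2) = (4*t)^(m+1) := by
    rw [show 2*m+2 = 2*(m+1) by ring, pow_mul, hr2]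
  rw [hrp]
  have e1 : (2*(m+1)).factorial = ((2*m+2) * ((2*m+1) * (2*m).factorial)) := by
    rw [show 2*(m+1) = (2*m+1)+1 by ring, Nat.factorial_succ, Nat.factorial_succ]
  have e2 : (m+1).factorial = (m+1) * m.factorial := Nat.factorial_succ m
  rw [e1, e2]
  have hm : (m.factorial : ℝ) ≠ 0 := Nat.cast_ne_zero.2 m.factorial_ne_zero
  have hm2 : ((2*m).factorial : ℝ) ≠ 0 := Nat.cast_ne_zero.2 (2*m).factorial_ne_zero
  have hpi : (π : ℝ) ≠ 0 := Real.pi_ne_zero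
  push_cast
  field_simp
  ring

lemma moment_odd (t : ℝ) (m : ℕ) :
    ∫ x : ℝ, x ^ (2*m+1) * semicircleDensity t x = 0 := by
  have hneg : ∀ x : ℝ, (-x) ^ (2*m+1) * semicircleDensity t (-x)
      = -(x ^ (2*m+1) * semicircleDensity t x) := by
    intro x
    have h1 : (-x : ℝ) ^ (2*m+1) = -(x^(2*m+1)) := Odd.neg_pow ⟨m, by ring⟩ x
    have h2 : semicircleDensity t (-x) = semicircleDensity t x := by
      simp [semicircleDensity, neg_pow]
    rw [h1, h2]; ring
  have := MeasureTheory.integral_neg_eq_self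
    (fun x : ℝ => x ^ (2*m+1) * semicircleDensity t x) volume
  simp only [hneg, MeasureTheory.integral_neg] at this
  linarith

lemma sd_measurable (t : ℝ) : Measurable (semicircleDensity t) := by
  unfold semicircleDensity
  exact Measurable.ite (measurableSet_le (by fun_prop) measurable_const)
    (by fun_prop) measurable_const

lemma sd_nonneg (t : ℝ) (ht : 0 < t) (x : ℝ) : 0 ≤ semicircleDensity t x := by
  unfold semicircleDensity
  split
  · positivity
  · exact le_rfl

lemma sd_le (t : ℝ) (ht : 0 < t) (x : ℝ) :
    semicircleDensity t x ≤ Real.sqrt (4*t) / (2*π*t) := by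
  unfold semicircleDensity
  split
  · exact (div_le_div_iff_of_pos_right (by positivity)).2
      (Real.sqrt_le_sqrt (by nlinarith [sq_nonneg x]))
  · positivity

lemma sd_iff (t : ℝ) (ht : 0 < t) (x : ℝ) :
    x^2 ≤ 4*t ↔ x ∈ Set.Icc (-(2*Real.sqrt t)) (2*Real.sqrt t) := by
  have hr0 : (0:ℝ) < 2*Real.sqrt t := by positivity
  have hr2 : (2*Real.sqrt t)^2 = 4*t := by rw [mul_pow, Real.sq_sqrt ht.le]; ring
  constructor
  · intro h
    constructor
    · by_contra hc; push_neg at hc; nlinarith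
    · by_contra hc; push_neg at hc; nlinarith
  · rintro ⟨h1, h2⟩; nlinarith

lemma sd_zero (t : ℝ) (ht : 0 < t) {x : ℝ}
    (hx : x ∉ Set.Icc (-(2*Real.sqrt t)) (2*Real.sqrt t)) : semicircleDensity t x = 0 := by
  rw [semicircleDensity, if_neg (fun hc => hx ((sd_iff t ht x).1 hc))]

lemma F_bound (t : ℝ) (ht : 0 < t) (u : ℝ) (n : ℕ) (x : ℝ) :
    ‖(Complex.I * u * x)^n / n.factorial * (semicircleDensity t x : ℂ)‖
      ≤ Set.indicator (Set.Icc (-(2*Real.sqrt t)) (2*Real.sqrt t))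
          (fun _ => (|u| * (2*Real.sqrt t))^n / n.factorial * (Real.sqrt (4*t)/(2*π*t))) x := by
  set r := 2*Real.sqrt t with hrdef
  have hr0 : (0:ℝ) < r := by positivity
  by_cases hx : x ∈ Set.Icc (-r) r
  · rw [Set.indicator_of_mem hx]
    have hxr : |x| ≤ r := abs_le.2 ⟨hx.1, hx.2⟩
    have h1 : ‖(Complex.I * u * x : ℂ)‖ = |u| * |x| := by
      simp [norm_mul, Complex.norm_real, Real.norm_eq_abs]
    rw [norm_mul, norm_div, norm_pow, h1]
    have h2 : ‖((n.factorial : ℕ) : ℂ)‖ = (n.factorial : ℝ) := by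
      simp
    have h3 : ‖((semicircleDensity t x : ℝ) : ℂ)‖ = semicircleDensity t x := by
      rw [Complex.norm_real, Real.norm_eq_abs, abs_of_nonneg (sd_nonneg t ht x)]
    rw [h2, h3]
    gcongr <;> first
      | exact sd_le t ht x
      | exact hxr
      | exact abs_nonneg u
      | exact sd_nonneg t ht x
      | positivity
  · rw [Set.indicator_of_notMem hx, sd_zero t ht hx]
    simp

lemma F_integrable (t : ℝ) (ht : 0 < t) (u : ℝ) (n : ℕ) :
    Integrable (fun x : ℝ =>
      (Complex.I * u * x)^n / n.factorial * (semicircleDensity t x : ℂ)) := by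
  apply Integrable.mono'
    (g := Set.indicator (Set.Icc (-(2*Real.sqrt t)) (2*Real.sqrt t))
      (fun _ => (|u| * (2*Real.sqrt t))^n / n.factorial * (Real.sqrt (4*t)/(2*π*t))))
  · rw [integrable_indicator_iff measurableSet_Icc]
    exact integrableOn_const measure_Icc_lt_top.ne enorm_ne_top
  · apply AEStronglyMeasurable.mul
    · exact (Continuous.aestronglyMeasurable (by fun_prop))
    · exact (Complex.measurable_ofReal.comp (sd_measurable t)).aestronglyMeasurable
  · exact Filter.Eventually.of_forall (F_bound t ht u n)


/-- The Fourier transform of the semicircle distribution of variance `t`, as an absolutely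
convergent series. -/
theorem semicircle_fourier_transform (t : ℝ) (ht : 0 < t) (u : ℝ) :
    (Summable fun m : ℕ =>
      |(-(u ^ 2) * t) ^ m / (Nat.factorial m * Nat.factorial (m + 1))|) ∧
    (∫ x : ℝ, Complex.exp (Complex.I * (u : ℂ) * (x : ℂ)) * (semicircleDensity t x : ℂ)) =
      ∑' m : ℕ,
        (((-(u ^ 2) * t) ^ m / (Nat.factorial m * Nat.factorial (m + 1)) : ℝ) : ℂ) := by
  constructor
  · apply Summable.of_nonneg_of_le (fun m => abs_nonneg _) ?_
      (Real.summable_pow_div_factorial (u^2*t))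
    intro m
    rw [abs_div, abs_pow]
    have h1 : |(-(u^2)*t)| = u^2*t := by
      rw [abs_mul, abs_neg, abs_of_nonneg (sq_nonneg u), abs_of_pos ht]
    rw [h1, abs_of_pos (by positivity : (0:ℝ) < (m.factorial : ℝ) * (m+1).factorial)]
    gcongr
    exact le_mul_of_one_le_right (by positivity)
        (by exact_mod_cast (m+1).factorial_pos)
  · set r := 2*Real.sqrt t with hrdef
    have hr0 : (0:ℝ) < r := by positivity
    set F : ℕ → ℝ → ℂ := fun n x =>
      (Complex.I * u * x)^n / n.factorial * (semicircleDensity t x : ℂ) with hF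
    have hInt : ∀ n, Integrable (F n) := fun n => F_integrable t ht u n
    have hSum : Summable fun n => ∫ x, ‖F n x‖ := by
      apply Summable.of_nonneg_of_le
        (fun n => integral_nonneg fun x => norm_nonneg _) ?_
        ((Real.summable_pow_div_factorial (|u| * r)).mul_left
          ((2*r) * (Real.sqrt (4*t)/(2*π*t))))
      intro n
      have hb : Integrable (Set.indicator (Set.Icc (-r) r)
          (fun _ : ℝ => (|u| * r)^n / n.factorial * (Real.sqrt (4*t)/(2*π*t)))) := by
        rw [integrable_indicator_iff measurableSet_Icc]
        exact integrableOn_const measure_Icc_lt_top.ne enorm_ne_top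
      calc ∫ x, ‖F n x‖
          ≤ ∫ x, Set.indicator (Set.Icc (-r) r)
            (fun _ : ℝ => (|u| * r)^n / n.factorial * (Real.sqrt (4*t)/(2*π*t))) x :=
            integral_mono (hInt n).norm hb (F_bound t ht u n)
        _ = ((volume (Set.Icc (-r) r)).toReal)
              • ((|u| * r)^n / n.factorial * (Real.sqrt (4*t)/(2*π*t))) :=
            integral_indicator_const _ measurableSet_Icc
        _ ≤ (2*r) * (Real.sqrt (4*t)/(2*π*t)) * ((|u| * r)^n / n.factorial) := by
            rw [Real.volume_Icc, smul_eq_mul,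
              ENNReal.toReal_ofReal (by linarith : (0:ℝ) ≤ r - -r)]
            apply le_of_eq
            ring
    have hexp : ∀ x : ℝ, Complex.exp (Complex.I*u*x) * (semicircleDensity t x : ℂ)
        = ∑' n, F n x := by
      intro x
      rw [Complex.exp_eq_exp_ℂ, NormedSpace.exp_eq_tsum_div]
      exact (tsum_mul_right).symm
    have hA : ∀ n, (∫ x, F n x) = (Complex.I*u)^n / n.factorial
        * ((∫ x : ℝ, x^n * semicircleDensity t x : ℝ) : ℂ) := by
      intro n
      have hptw : ∀ x : ℝ, F n x = (Complex.I*u)^n / n.factorial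
          * (((x^n * semicircleDensity t x : ℝ)) : ℂ) := by
        intro x; rw [hF]; push_cast; rw [mul_pow]; ring
      simp_rw [hptw]
      rw [MeasureTheory.integral_const_mul]
      congr 1
      exact _root_.integral_ofReal
    have hA_odd : ∀ m : ℕ, (∫ x, F (2*m+1) x) = 0 := by
      intro m
      rw [hA, moment_odd t m]
      simp
    have hA_even : ∀ m : ℕ, (∫ x, F (2*m) x)
        = (((-(u ^ 2) * t) ^ m / (Nat.factorial m * Nat.factorial (m + 1)) : ℝ) : ℂ) := by
      intro m
      rw [hA, moment_even t ht m]
      have hIu : (Complex.I*u)^(2*m) = ((-(u^2) : ℝ) : ℂ)^m := by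
        rw [pow_mul]
        congr 1
        rw [mul_pow, Complex.I_sq]
        push_cast
        ring
      rw [hIu]
      have c1 : ((m.factorial : ℝ) : ℂ) ≠ 0 := by
        exact_mod_cast Nat.cast_ne_zero.2 m.factorial_ne_zero
      have c2 : (((m+1).factorial : ℝ) : ℂ) ≠ 0 := by
        exact_mod_cast Nat.cast_ne_zero.2 (m+1).factorial_ne_zero
      have c3 : (((2*m).factorial : ℝ) : ℂ) ≠ 0 := by
        exact_mod_cast Nat.cast_ne_zero.2 (2*m).factorial_ne_zero
      have key : ∀ (a b c d : ℂ), c ≠ 0 → a / c * (b * c / d) = a * b / d := by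
        intro a b c d hc
        calc a / c * (b * c / d) = a * b * (c / c) / d := by ring
          _ = a * b / d := by rw [div_self hc, mul_one]
      have c3' : (((2*m).factorial : ℕ) : ℂ) ≠ 0 := Nat.cast_ne_zero.2 (2*m).factorial_ne_zero
      push_cast
      rw [key _ _ _ _ c3', ← mul_pow]
    calc (∫ x : ℝ, Complex.exp (Complex.I * u * x) * (semicircleDensity t x : ℂ))
        = ∫ x : ℝ, ∑' n, F n x := integral_congr_ae (Filter.Eventually.of_forall hexp)
      _ = ∑' n, ∫ x, F n x :=
          (MeasureTheory.integral_tsum_of_summable_integral_norm hInt hSum).symm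
      _ = ∑' m : ℕ, ∫ x, F (2*m) x := by
          refine (Function.Injective.tsum_eq (g := fun m : ℕ => 2*m)
            (mul_right_injective₀ two_ne_zero) ?_).symm
          intro n hn
          rcases Nat.even_or_odd n with ⟨k, hk⟩ | ⟨k, hk⟩
          · refine ⟨k, ?_⟩; show 2*k = n; omega
          · exact absurd (hk ▸ hA_odd k) hn
      _ = ∑' m : ℕ,
          (((-(u ^ 2) * t) ^ m / (Nat.factorial m * Nat.factorial (m + 1)) : ℝ) : ℂ) :=
          tsum_congr hA_even
end

section
/- For every t > 0 and every natural number m, ∫_ℝ x^{2m} s_t(x) dx = t^m · (2m)! / (m! · (m+1)!), and ∫_ℝ x^{2m+1} s_t(x) dx = 0. -/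
open MeasureTheory Real intervalIntegral

private lemma sin_pow_int' (k : ℕ) :
    ∫ x in (-(π/2))..(π/2), Real.sin x ^ (2*k)
      = π * (Nat.factorial (2*k)) / (4^k * (Nat.factorial k)^2) := by
  induction k with
  | zero => simp
  | succ k ih =>
    have h2 : 2 * (k+1) = 2*k + 2 := by ring
    rw [h2, integral_sin_pow]
    rw [Real.cos_pi_div_two, Real.sin_pi_div_two]
    rw [show (-(π/2)) = -(π/2) from rfl]
    rw [Real.cos_neg, Real.sin_neg, Real.cos_pi_div_two, Real.sin_pi_div_two, ih]
    have hf1 : (Nat.factorial (2*(k+1)) : ℝ) = (2*k+2) * (2*k+1) * Nat.factorial (2*k) := by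
      rw [show 2*(k+1) = (2*k+1)+1 by ring, Nat.factorial_succ, Nat.factorial_succ]
      push_cast; ring
    have hf2 : (Nat.factorial (k+1) : ℝ) = (k+1) * Nat.factorial k := by
      rw [Nat.factorial_succ]; push_cast; ring
    have h4 : (4:ℝ)^(k+1) = 4 * 4^k := by ring
    have hk0 : (Nat.factorial k : ℝ) ≠ 0 := Nat.cast_ne_zero.mpr (Nat.factorial_ne_zero k)
    have h4k : (4:ℝ)^k ≠ 0 := by positivity
    rw [show 2*(k+1) = 2*k+2 by ring] at hf1
    rw [hf1, hf2, h4]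
    field_simp
    push_cast; ring


private lemma semicircle_even (t : ℝ) (ht : 0 < t) (m : ℕ) :
    (∫ x : ℝ, x ^ (2 * m) * semicircleDensity t x) =
        t ^ m * (Nat.factorial (2 * m)) / (Nat.factorial m * Nat.factorial (m + 1)) := by
  set a : ℝ := 2 * Real.sqrt t with ha_def
  have hst : Real.sqrt t > 0 := Real.sqrt_pos.mpr ht
  have ha : 0 < a := by positivity
  have ha2 : a ^ 2 = 4 * t := by
    rw [ha_def, mul_pow, Real.sq_sqrt ht.le]; ring
  -- indicator form
  have hind : ∀ x : ℝ, x ^ (2*m) * semicircleDensity t x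
      = Set.indicator (Set.Icc (-a) a)
          (fun x => x ^ (2*m) * (Real.sqrt (4*t - x^2) / (2*π*t))) x := by
    intro x
    have hiff : x ^ 2 ≤ 4 * t ↔ x ∈ Set.Icc (-a) a := by
      rw [← ha2, Set.mem_Icc]
      constructor
      · intro h; constructor <;> nlinarith
      · intro ⟨h1, h2⟩; nlinarith
    by_cases h : x ^ 2 ≤ 4 * t
    · rw [Set.indicator_of_mem (hiff.mp h)]
      simp [semicircleDensity, h]
    · rw [Set.indicator_of_notMem (fun hm => h (hiff.mpr hm))]
      simp [semicircleDensity, h]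
  rw [show (∫ x : ℝ, x ^ (2*m) * semicircleDensity t x)
      = ∫ x : ℝ, Set.indicator (Set.Icc (-a) a)
          (fun x => x ^ (2*m) * (Real.sqrt (4*t - x^2) / (2*π*t))) x from by
        exact integral_congr_ae (Filter.Eventually.of_forall hind)]
  rw [MeasureTheory.integral_indicator measurableSet_Icc, integral_Icc_eq_integral_Ioc,
    ← intervalIntegral.integral_of_le (by linarith : -a ≤ a)]
  -- substitution x = a * sin θ
  have hsub := intervalIntegral.integral_comp_mul_deriv
    (a := -(π/2)) (b := π/2)
    (f := fun θ => a * Real.sin θ) (f' := fun θ => a * Real.cos θ)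
    (g := fun x => x ^ (2*m) * (Real.sqrt (4*t - x^2) / (2*π*t)))
    (fun x _ => by simpa using (Real.hasDerivAt_sin x).const_mul a)
    (by fun_prop)
    (by fun_prop)
  simp only [Real.sin_neg, Real.sin_pi_div_two, mul_one, mul_neg] at hsub
  rw [← hsub]
  -- rewrite integrand on the interval
  have hcongr : ∀ θ ∈ Set.uIcc (-(π/2)) (π/2),
      ((fun x => x ^ (2*m) * (Real.sqrt (4*t - x^2) / (2*π*t))) ∘ (fun θ => a * Real.sin θ)) θ
        * (a * Real.cos θ)
      = ((4*t)^(m+1) / (2*π*t)) * (Real.sin θ ^ (2*m) - Real.sin θ ^ (2*m+2)) := by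
    intro θ hθ
    have hθ' : θ ∈ Set.Icc (-(π/2)) (π/2) := by
      rwa [Set.uIcc_of_le (by linarith [Real.pi_pos])] at hθ
    have hcos : 0 ≤ Real.cos θ := Real.cos_nonneg_of_mem_Icc hθ'
    have hsq : 4*t - (a * Real.sin θ)^2 = (4*t) * Real.cos θ ^ 2 := by
      rw [mul_pow, ha2]
      have := Real.sin_sq_add_cos_sq θ
      nlinarith
    have hsqrt : Real.sqrt (4*t - (a * Real.sin θ)^2) = a * Real.cos θ := by
      rw [hsq, ← ha2, ← mul_pow, Real.sqrt_sq (by positivity)]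
    simp only [Function.comp]
    rw [hsqrt]
    have hpow : (a * Real.sin θ) ^ (2*m) = (4*t)^m * Real.sin θ ^ (2*m) := by
      rw [mul_pow, pow_mul, ha2]
    rw [hpow]
    have hcos2 : Real.cos θ ^ 2 = 1 - Real.sin θ ^ 2 := Real.cos_sq' θ
    have : (4*t)^(m+1) = (4*t)^m * (4*t) := by ring
    rw [this]
    have h1 : Real.sin θ ^ (2*m) - Real.sin θ ^ (2*m+2)
        = Real.sin θ ^ (2*m) * (1 - Real.sin θ ^ 2) := by ring
    rw [h1, ← hcos2, ← ha2]
    ring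
  rw [intervalIntegral.integral_congr hcongr]
  rw [intervalIntegral.integral_const_mul]
  rw [intervalIntegral.integral_sub
    ((by fun_prop : Continuous fun x => Real.sin x ^ (2*m)).intervalIntegrable _ _)
    ((by fun_prop : Continuous fun x => Real.sin x ^ (2*m+2)).intervalIntegrable _ _)]
  rw [sin_pow_int' m, show 2*m+2 = 2*(m+1) by ring, sin_pow_int' (m+1)]
  -- arithmetic
  have hf1 : (Nat.factorial (2*(m+1)) : ℝ) = (2*m+2) * (2*m+1) * Nat.factorial (2*m) := by
    rw [show 2*(m+1) = (2*m+1)+1 by ring, Nat.factorial_succ, Nat.factorial_succ]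
    push_cast; ring
  have hf2 : (Nat.factorial (m+1) : ℝ) = (m+1) * Nat.factorial m := by
    rw [Nat.factorial_succ]; push_cast; ring
  have hm0 : (Nat.factorial m : ℝ) ≠ 0 := Nat.cast_ne_zero.mpr (Nat.factorial_ne_zero m)
  have h4m : (4:ℝ)^m ≠ 0 := by positivity
  have hpi : (π:ℝ) ≠ 0 := Real.pi_ne_zero
  have ht' : (t:ℝ) ≠ 0 := ht.ne'
  rw [hf1, hf2]
  have h4t : (4*t)^(m+1) = 4^(m+1) * t^(m+1) := by rw [mul_pow]
  rw [h4t]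
  have htm : (t:ℝ)^(m+1) = t^m * t := by ring
  field_simp
  ring


/-- Moments of the semicircle distribution of variance `t`: the even moments are Catalan
numbers scaled by powers of `t`, and the odd moments vanish. -/
theorem semicircle_moments (t : ℝ) (ht : 0 < t) (m : ℕ) :
    (∫ x : ℝ, x ^ (2 * m) * semicircleDensity t x) =
        t ^ m * (Nat.factorial (2 * m)) / (Nat.factorial m * Nat.factorial (m + 1)) ∧
    (∫ x : ℝ, x ^ (2 * m + 1) * semicircleDensity t x) = 0 := by
  refine ⟨semicircle_even t ht m, ?_⟩
  have hodd : ∀ x : ℝ, (-x) ^ (2*m+1) * semicircleDensity t (-x)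
      = -(x ^ (2*m+1) * semicircleDensity t x) := by
    intro x
    have h1 : semicircleDensity t (-x) = semicircleDensity t x := by
      simp [semicircleDensity, neg_sq]
    rw [h1, Odd.neg_pow ⟨m, by ring⟩]
    ring
  have h2 : ∫ x : ℝ, (-x) ^ (2*m+1) * semicircleDensity t (-x)
      = ∫ x : ℝ, x ^ (2*m+1) * semicircleDensity t x :=
    integral_neg_eq_self (fun x => x ^ (2*m+1) * semicircleDensity t x) volume
  rw [integral_congr_ae (Filter.Eventually.of_forall hodd), MeasureTheory.integral_neg] at h2
  linarith
end

section
/- Let N ≥ 1, let x_1, …, x_N be nonzero complex numbers, let μ_1, …, μ_N be integers, and let n be an integer. Then det(x_j^{μ_k})_{j,k=1}^N · (Σ_{j=1}^N x_j^n) = Σ_{m=1}^N det(M^{(m)}), where M^{(m)} is the N×N matrix with entries M^{(m)}_{j,k} = x_j^{μ_k + n} if k = m and M^{(m)}_{j,k} = x_j^{μ_k} otherwise. -/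
open scoped BigOperators

/-- The multiplication rule for Weyl alternant determinants: multiplying the alternant
`det(x_j^{μ_k})` by the power sum `∑_j x_j^n` yields the sum of the alternants obtained by
shifting one exponent by `n`. -/
theorem alternant_mul_powerSum (N : ℕ) (hN : 1 ≤ N) (x : Fin N → ℂ) (hx : ∀ j, x j ≠ 0)
    (μ : Fin N → ℤ) (n : ℤ) :
    (Matrix.of fun j k : Fin N => x j ^ μ k).det * (∑ j : Fin N, x j ^ n) =
      ∑ m : Fin N, (Matrix.of fun j k : Fin N =>
        if k = m then x j ^ (μ k + n) else x j ^ μ k).det := by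
  classical
  simp only [Matrix.det_apply, Matrix.of_apply]
  rw [Finset.sum_comm, Finset.sum_mul]
  refine Finset.sum_congr rfl fun σ _ => ?_
  have key : ∀ m : Fin N,
      (∏ k : Fin N, if k = m then x (σ k) ^ (μ k + n) else x (σ k) ^ μ k)
        = (x (σ m) ^ n) * ∏ k : Fin N, x (σ k) ^ μ k := by
    intro m
    rw [Finset.prod_eq_mul_prod_sdiff_singleton_of_mem (Finset.mem_univ m),
      Finset.prod_eq_mul_prod_sdiff_singleton_of_mem (Finset.mem_univ m)
        (fun k => x (σ k) ^ μ k)]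
    have h1 : (∏ k ∈ Finset.univ \ {m}, if k = m then x (σ k) ^ (μ k + n)
        else x (σ k) ^ μ k) = ∏ k ∈ Finset.univ \ {m}, x (σ k) ^ μ k := by
      refine Finset.prod_congr rfl fun k hk => ?_
      simp only [Finset.mem_sdiff, Finset.mem_singleton] at hk
      simp [hk.2]
    rw [h1, if_pos rfl, zpow_add₀ (hx _)]
    ring
  have hsum : ∑ m : Fin N, x (σ m) ^ n = ∑ j : Fin N, x j ^ n :=
    Equiv.sum_comp σ (fun j => x j ^ n)
  rw [← hsum, Finset.mul_sum]
  refine Finset.sum_congr rfl fun m _ => ?_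
  rw [key m, mul_comm (x (σ m) ^ n), ← smul_mul_assoc]
end

section
/- Let (Ω, F, P) be a probability space, let N ≥ 1, and let U, V : Ω → M_N(ℂ) be measurable maps taking values in the unitary group U(N). Write tr = Tr/N for the normalized trace. Then √(1 − Re E[tr(V·U)]) ≤ √(1 − Re E[tr U]) + √(1 − Re E[tr V]). (Note that 1 − Re E[tr W] ∈ [0, 2] for any random unitary W, so the square roots are well defined.) -/
open MeasureTheory Matrix

/-- Matrices over a measurable space carry the product measurable structure, entrywise. -/
instance matrixMeasurableSpace {m n α : Type*} [MeasurableSpace α] :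
    MeasurableSpace (Matrix m n α) :=
  inferInstanceAs (MeasurableSpace (m → n → α))

section Aux

attribute [local instance] Matrix.frobeniusNormedAddCommGroup

variable {N : ℕ}

/-- Frobenius norm squared equals the real part of `Tr(Aᴴ A)`. -/
lemma aux_star_mul_self_re (z : ℂ) : (star z * z).re = ‖z‖ ^ 2 := by
  have h : ‖z‖ ^ 2 = z.re ^ 2 + z.im ^ 2 := by
    rw [Complex.sq_norm, Complex.normSq_apply]; ring
  simp only [Complex.star_def, Complex.mul_re, Complex.conj_re, Complex.conj_im, h]
  ring

/-- Frobenius norm squared equals the real part of `Tr(Aᴴ A)`. -/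
lemma aux_norm_sq_eq (A : Matrix (Fin N) (Fin N) ℂ) :
    ‖A‖ ^ 2 = ((Aᴴ * A).trace).re := by
  have h1 : ‖A‖ ^ 2 = ∑ i, ∑ j, ‖A i j‖ ^ 2 := by
    rw [Matrix.frobenius_norm_def, ← Real.rpow_natCast _ 2, ← Real.rpow_mul (by positivity)]
    norm_num [Real.rpow_two]
  rw [h1]
  simp only [Matrix.trace, Matrix.diag, Matrix.mul_apply, Matrix.conjTranspose_apply,
    Complex.re_sum, aux_star_mul_self_re]
  rw [Finset.sum_comm]

lemma aux_norm_unitary_mul (Q A : Matrix (Fin N) (Fin N) ℂ)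
    (hQ : Q ∈ Matrix.unitaryGroup (Fin N) ℂ) : ‖Q * A‖ = ‖A‖ := by
  have hQ1 : Qᴴ * Q = 1 := Matrix.mem_unitaryGroup_iff'.mp hQ
  have h : ‖Q * A‖ ^ 2 = ‖A‖ ^ 2 := by
    rw [aux_norm_sq_eq, aux_norm_sq_eq]
    congr 2
    rw [Matrix.conjTranspose_mul, Matrix.mul_assoc, ← Matrix.mul_assoc Qᴴ, hQ1, Matrix.one_mul]
  have := congrArg Real.sqrt h
  simpa [Real.sqrt_sq (norm_nonneg _)] using this

lemma aux_norm_one_sub_sq (W : Matrix (Fin N) (Fin N) ℂ)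
    (hW : W ∈ Matrix.unitaryGroup (Fin N) ℂ) :
    ‖(1 : Matrix (Fin N) (Fin N) ℂ) - W‖ ^ 2 = 2 * N - 2 * (W.trace).re := by
  have hW1 : Wᴴ * W = 1 := Matrix.mem_unitaryGroup_iff'.mp hW
  rw [aux_norm_sq_eq]
  have : ((1 : Matrix (Fin N) (Fin N) ℂ) - W)ᴴ * (1 - W) = 1 - Wᴴ - W + Wᴴ * W := by
    rw [Matrix.conjTranspose_sub, Matrix.conjTranspose_one]
    noncomm_ring
  rw [this, hW1]
  simp only [Matrix.trace_add, Matrix.trace_sub, Matrix.trace_one, Matrix.trace_conjTranspose]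
  simp [Complex.add_re, Complex.sub_re, Matrix.trace]
  ring

lemma aux_entry_norm_le (W : Matrix (Fin N) (Fin N) ℂ)
    (hW : W ∈ Matrix.unitaryGroup (Fin N) ℂ) (i j : Fin N) : ‖W i j‖ ≤ 1 := by
  have hW1 : Wᴴ * W = 1 := Matrix.mem_unitaryGroup_iff'.mp hW
  have h : ((Wᴴ * W) j j).re = 1 := by rw [hW1]; simp
  have hsum : ∑ k, Complex.normSq (W k j) = 1 := by
    rw [← h]
    simp only [Matrix.mul_apply, Matrix.conjTranspose_apply, Complex.re_sum]
    refine Finset.sum_congr rfl fun k _ => ?_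
    rw [aux_star_mul_self_re, Complex.sq_norm]
  have hle : ‖W i j‖ ^ 2 ≤ 1 := by
    rw [Complex.sq_norm, ← hsum]
    exact Finset.single_le_sum (f := fun k => Complex.normSq (W k j))
      (fun k _ => Complex.normSq_nonneg _) (Finset.mem_univ i)
  nlinarith [norm_nonneg (W i j)]

lemma aux_entry_measurable {Ω : Type*} [MeasurableSpace Ω]
    {W : Ω → Matrix (Fin N) (Fin N) ℂ} (hW : Measurable W) (i j : Fin N) :
    Measurable fun ω => W ω i j :=
  (measurable_pi_apply j).comp ((measurable_pi_apply i).comp hW)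

lemma aux_trace_measurable {Ω : Type*} [MeasurableSpace Ω]
    {W : Ω → Matrix (Fin N) (Fin N) ℂ} (hW : Measurable W) :
    Measurable fun ω => (W ω).trace := by
  simp only [Matrix.trace, Matrix.diag]
  exact Finset.measurable_sum _ fun i _ => aux_entry_measurable hW i i

lemma aux_norm_measurable {Ω : Type*} [MeasurableSpace Ω]
    {W : Ω → Matrix (Fin N) (Fin N) ℂ} (hW : Measurable W) :
    Measurable fun ω => ‖(1 : Matrix (Fin N) (Fin N) ℂ) - W ω‖ := by
  have hent : ∀ i j : Fin N, Measurable fun ω =>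
      ((1 : Matrix (Fin N) (Fin N) ℂ) - W ω) i j := by
    intro i j
    simp only [Matrix.sub_apply]
    exact measurable_const.sub (aux_entry_measurable hW i j)
  have hrw : (fun ω => ‖(1 : Matrix (Fin N) (Fin N) ℂ) - W ω‖) =
      fun ω => Real.sqrt (∑ i, ∑ j, ‖((1 : Matrix (Fin N) (Fin N) ℂ) - W ω) i j‖ ^ 2) := by
    funext ω
    rw [Matrix.frobenius_norm_def, Real.sqrt_eq_rpow]
    congr 1
    refine Finset.sum_congr rfl fun i _ => Finset.sum_congr rfl fun j _ => ?_
    rw [Real.rpow_two]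
  rw [hrw]
  exact Real.continuous_sqrt.measurable.comp (Finset.measurable_sum _ fun i _ =>
    Finset.measurable_sum _ fun j _ => ((hent i j).norm.pow_const 2))

lemma aux_int_of_bdd {Ω : Type*} [MeasurableSpace Ω] {P : Measure Ω}
    [IsProbabilityMeasure P] {f : Ω → ℝ} (hm : Measurable f) (C : ℝ)
    (hb : ∀ ω, |f ω| ≤ C) : Integrable f P :=
  memLp_one_iff_integrable.mp <|
    MemLp.of_bound hm.aestronglyMeasurable C (ae_of_all _ (by simpa [Real.norm_eq_abs] using hb))

lemma aux_norm_bdd (hN : 1 ≤ N) {W : Matrix (Fin N) (Fin N) ℂ}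
    (hW : W ∈ Matrix.unitaryGroup (Fin N) ℂ) :
    ‖(1 : Matrix (Fin N) (Fin N) ℂ) - W‖ ≤ 2 * N := by
  have hN' : (1 : ℝ) ≤ N := by exact_mod_cast hN
  have h := aux_norm_one_sub_sq W hW
  have htr : |(W.trace).re| ≤ N := by
    have : ‖W.trace‖ ≤ N := by
      calc ‖W.trace‖ ≤ ∑ i, ‖W i i‖ := by
            simpa [Matrix.trace, Matrix.diag] using norm_sum_le Finset.univ fun i => W i i
        _ ≤ ∑ _i : Fin N, (1 : ℝ) := by
            exact Finset.sum_le_sum fun i _ => aux_entry_norm_le W hW i i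
        _ = N := by simp
    exact le_trans (Complex.abs_re_le_norm _) this
  nlinarith [norm_nonneg ((1 : Matrix (Fin N) (Fin N) ℂ) - W), abs_le.mp htr,
    sq_nonneg (‖(1 : Matrix (Fin N) (Fin N) ℂ) - W‖ - 2 * N)]

/-- Key identity: the defect equals an `L²` quantity. -/
lemma aux_defect_eq {Ω : Type*} [MeasurableSpace Ω] (P : Measure Ω)
    [IsProbabilityMeasure P] (hN : 1 ≤ N) {W : Ω → Matrix (Fin N) (Fin N) ℂ}
    (hW : Measurable W) (hWu : ∀ ω, W ω ∈ Matrix.unitaryGroup (Fin N) ℂ) :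
    1 - (∫ ω, (W ω).trace / (N : ℂ) ∂P).re =
      (∫ ω, ‖(1 : Matrix (Fin N) (Fin N) ℂ) - W ω‖ ^ 2 ∂P) / (2 * N) := by
  have hNR : (0 : ℝ) < N := by exact_mod_cast hN
  have htr_bdd : ∀ ω, ‖(W ω).trace‖ ≤ N := fun ω => by
    calc ‖(W ω).trace‖ ≤ ∑ i, ‖W ω i i‖ := by
          simpa [Matrix.trace, Matrix.diag] using norm_sum_le Finset.univ fun i => W ω i i
      _ ≤ ∑ _i : Fin N, (1 : ℝ) := Finset.sum_le_sum fun i _ => aux_entry_norm_le _ (hWu ω) i i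
      _ = N := by simp
  have htr_int : Integrable (fun ω => (W ω).trace) P :=
    memLp_one_iff_integrable.mp <|
      MemLp.of_bound (aux_trace_measurable hW).aestronglyMeasurable (N : ℝ)
        (ae_of_all _ htr_bdd)
  have hre_int : Integrable (fun ω => ((W ω).trace).re) P := by
    refine aux_int_of_bdd (Complex.measurable_re.comp (aux_trace_measurable hW)) (N : ℝ)
      fun ω => ?_
    exact le_trans (Complex.abs_re_le_norm _) (htr_bdd ω)
  have h1 : (∫ ω, (W ω).trace / (N : ℂ) ∂P).re = (∫ ω, ((W ω).trace).re ∂P) / N := by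
    rw [integral_div]
    have : ((N : ℂ)) = ((N : ℝ) : ℂ) := by push_cast; ring
    rw [this, Complex.div_ofReal_re]
    congr 1
    exact (integral_re htr_int).symm
  have h2 : ∫ ω, ‖(1 : Matrix (Fin N) (Fin N) ℂ) - W ω‖ ^ 2 ∂P =
      2 * N - 2 * ∫ ω, ((W ω).trace).re ∂P := by
    have : ∀ ω, ‖(1 : Matrix (Fin N) (Fin N) ℂ) - W ω‖ ^ 2 =
        2 * N - 2 * ((W ω).trace).re := fun ω => aux_norm_one_sub_sq _ (hWu ω)
    rw [integral_congr_ae (ae_of_all _ this), integral_sub (integrable_const _)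
      (hre_int.const_mul 2), integral_const, integral_const_mul]
    simp
  rw [h1, h2]
  field_simp

end Aux

set_option maxHeartbeats 1000000 in
/-- Subadditivity of the defect functional `Ψ_N(α) = √(1 − Re E[tr H_α])` for random
unitary matrices. -/
theorem defect_subadditive {Ω : Type*} [MeasurableSpace Ω] (P : Measure Ω)
    [IsProbabilityMeasure P] (N : ℕ) (hN : 1 ≤ N)
    (U V : Ω → Matrix (Fin N) (Fin N) ℂ) (hU : Measurable U) (hV : Measurable V)
    (hUu : ∀ ω, U ω ∈ Matrix.unitaryGroup (Fin N) ℂ)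
    (hVu : ∀ ω, V ω ∈ Matrix.unitaryGroup (Fin N) ℂ) :
    Real.sqrt (1 - (∫ ω, (V ω * U ω).trace / (N : ℂ) ∂P).re) ≤
      Real.sqrt (1 - (∫ ω, (U ω).trace / (N : ℂ) ∂P).re) +
        Real.sqrt (1 - (∫ ω, (V ω).trace / (N : ℂ) ∂P).re) := by
  classical
  letI : NormedAddCommGroup (Matrix (Fin N) (Fin N) ℂ) := Matrix.frobeniusNormedAddCommGroup
  set f : Ω → ℝ := fun ω => ‖(1 : Matrix (Fin N) (Fin N) ℂ) - U ω‖ with hf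
  set g : Ω → ℝ := fun ω => ‖(1 : Matrix (Fin N) (Fin N) ℂ) - V ω‖ with hg
  set h : Ω → ℝ := fun ω => ‖(1 : Matrix (Fin N) (Fin N) ℂ) - V ω * U ω‖ with hh
  have hVUm : Measurable fun ω => V ω * U ω := by
    refine measurable_pi_lambda _ fun i => measurable_pi_lambda _ fun j => ?_
    have : (fun ω => (V ω * U ω) i j) = fun ω => ∑ k, V ω i k * U ω k j := by
      funext ω; rw [Matrix.mul_apply]
    rw [this]
    exact Finset.measurable_sum _ fun k _ =>
      (aux_entry_measurable hV i k).mul (aux_entry_measurable hU k j)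
  have hVUu : ∀ ω, V ω * U ω ∈ Matrix.unitaryGroup (Fin N) ℂ := fun ω =>
    mul_mem (hVu ω) (hUu ω)
  -- pointwise triangle inequality
  have hpt : ∀ ω, h ω ≤ f ω + g ω := by
    intro ω
    have hdec : (1 : Matrix (Fin N) (Fin N) ℂ) - V ω * U ω
        = ((1 : Matrix (Fin N) (Fin N) ℂ) - V ω) + V ω * (1 - U ω) := by
      rw [Matrix.mul_sub, Matrix.mul_one]; abel
    show ‖(1 : Matrix (Fin N) (Fin N) ℂ) - V ω * U ω‖ ≤
      ‖(1 : Matrix (Fin N) (Fin N) ℂ) - U ω‖ + ‖(1 : Matrix (Fin N) (Fin N) ℂ) - V ω‖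
    rw [hdec]
    refine le_trans (norm_add_le _ _) ?_
    rw [aux_norm_unitary_mul _ _ (hVu ω)]
    linarith
  -- measurability and bounds
  have hfm : Measurable f := aux_norm_measurable hU
  have hgm : Measurable g := aux_norm_measurable hV
  have hhm : Measurable h := aux_norm_measurable hVUm
  have hfb : ∀ ω, f ω ≤ 2 * N := fun ω => aux_norm_bdd hN (hUu ω)
  have hgb : ∀ ω, g ω ≤ 2 * N := fun ω => aux_norm_bdd hN (hVu ω)
  have hhb : ∀ ω, h ω ≤ 2 * N := fun ω => aux_norm_bdd hN (hVUu ω)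
  have hf0 : ∀ ω, 0 ≤ f ω := fun ω => norm_nonneg _
  have hg0 : ∀ ω, 0 ≤ g ω := fun ω => norm_nonneg _
  have hh0 : ∀ ω, 0 ≤ h ω := fun ω => norm_nonneg _
  -- integrability of squares
  have sq_int : ∀ (k : Ω → ℝ), Measurable k → (∀ ω, 0 ≤ k ω) → (∀ ω, k ω ≤ 2 * N) →
      Integrable (fun ω => k ω ^ 2) P := by
    intro k hk h0 hb
    refine aux_int_of_bdd (hk.pow_const 2) ((2 * N) ^ 2) fun ω => ?_
    rw [abs_of_nonneg (by positivity)]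
    exact pow_le_pow_left₀ (h0 ω) (hb ω) 2
  have hf2 := sq_int f hfm hf0 hfb
  have hg2 := sq_int g hgm hg0 hgb
  have hh2 := sq_int h hhm hh0 hhb
  set A := ∫ ω, f ω ^ 2 ∂P with hA
  set B := ∫ ω, g ω ^ 2 ∂P with hB
  set C := ∫ ω, h ω ^ 2 ∂P with hC
  have hA0 : 0 ≤ A := integral_nonneg fun ω => by positivity
  have hB0 : 0 ≤ B := integral_nonneg fun ω => by positivity
  have hC0 : 0 ≤ C := integral_nonneg fun ω => by positivity
  -- Cauchy-Schwarz
  have hmem2 : ∀ (k : Ω → ℝ), Measurable k → (∀ ω, 0 ≤ k ω) → (∀ ω, k ω ≤ 2 * N) →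
      MemLp k (ENNReal.ofReal 2) P := by
    intro k hk h0 hb
    refine MemLp.of_bound hk.aestronglyMeasurable (2 * N) (ae_of_all _ fun ω => ?_)
    rw [Real.norm_eq_abs, abs_of_nonneg (h0 ω)]; exact hb ω
  have hCS : ∫ ω, f ω * g ω ∂P ≤ Real.sqrt A * Real.sqrt B := by
    have h22 : Real.HolderConjugate 2 2 := by
      constructor
      · norm_num
      · norm_num
      · norm_num
    have := MeasureTheory.integral_mul_le_Lp_mul_Lq_of_nonneg h22
      (ae_of_all _ hf0) (ae_of_all _ hg0)
      (hmem2 f hfm hf0 hfb) (hmem2 g hgm hg0 hgb)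
    simp only [Real.rpow_two] at this
    rw [hA, hB, Real.sqrt_eq_rpow, Real.sqrt_eq_rpow]
    exact this
  -- main L² inequality
  have hmain : Real.sqrt C ≤ Real.sqrt A + Real.sqrt B := by
    have hCle : C ≤ (Real.sqrt A + Real.sqrt B) ^ 2 := by
      have hint_fg : Integrable (fun ω => f ω * g ω) P := by
        refine aux_int_of_bdd (hfm.mul hgm) ((2 * N) * (2 * N)) fun ω => ?_
        rw [abs_of_nonneg (mul_nonneg (hf0 ω) (hg0 ω))]
        exact mul_le_mul (hfb ω) (hgb ω) (hg0 ω) (by positivity)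
      have h1 : C ≤ ∫ ω, (f ω + g ω) ^ 2 ∂P := by
        refine integral_mono hh2 ?_ fun ω => ?_
        · have : (fun ω => (f ω + g ω) ^ 2) =
              fun ω => f ω ^ 2 + 2 * (f ω * g ω) + g ω ^ 2 := by
            funext ω; ring
          rw [this]
          exact (hf2.add (hint_fg.const_mul 2)).add hg2
        · exact pow_le_pow_left₀ (hh0 ω) (hpt ω) 2
      have hadd1 : Integrable (fun ω => 2 * (f ω * g ω) + g ω ^ 2) P :=
        (hint_fg.const_mul 2).add hg2
      have h2 : ∫ ω, (f ω + g ω) ^ 2 ∂P = A + 2 * ∫ ω, f ω * g ω ∂P + B := by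
        have e : ∀ ω, (f ω + g ω) ^ 2 = f ω ^ 2 + (2 * (f ω * g ω) + g ω ^ 2) := fun ω => by ring
        simp only [e]
        rw [integral_add hf2 hadd1, integral_add (hint_fg.const_mul 2) hg2,
          integral_const_mul, hA, hB]
        ring
      have h3 : A + 2 * ∫ ω, f ω * g ω ∂P + B ≤ (Real.sqrt A + Real.sqrt B) ^ 2 := by
        have hAs : Real.sqrt A ^ 2 = A := Real.sq_sqrt hA0
        have hBs : Real.sqrt B ^ 2 = B := Real.sq_sqrt hB0
        nlinarith [hCS]
      linarith
    calc Real.sqrt C ≤ Real.sqrt ((Real.sqrt A + Real.sqrt B) ^ 2) :=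
          Real.sqrt_le_sqrt hCle
      _ = Real.sqrt A + Real.sqrt B := Real.sqrt_sq (by positivity)
  -- rewrite the goal using the defect identity
  have hNR : (0 : ℝ) < N := by exact_mod_cast hN
  rw [aux_defect_eq P hN hU hUu, aux_defect_eq P hN hV hVu, aux_defect_eq P hN hVUm hVUu]
  rw [Real.sqrt_div' _ (by positivity : (0:ℝ) ≤ 2 * N),
    Real.sqrt_div' _ (by positivity : (0:ℝ) ≤ 2 * N),
    Real.sqrt_div' _ (by positivity : (0:ℝ) ≤ 2 * N), ← add_div]
  have h2N : 0 < Real.sqrt (2 * N) := Real.sqrt_pos.mpr (by positivity)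
  exact div_le_div_of_nonneg_right hmain h2N.le
end

section
/- Let (Ω, F, P) be a probability space, let N ≥ 1, and let U, V : Ω → M_N(ℂ) be measurable maps taking values in the unitary group U(N). Write tr = Tr/N for the normalized trace. Then |√(1 − Re E[tr U]) − √(1 − Re E[tr V])| ≤ √(1 − Re E[tr(U·V*)]). -/
open MeasureTheory Matrix

noncomputable section DefectAux

open scoped InnerProductSpace ComplexConjugate

/-- View a matrix as a point of Euclidean space (Frobenius geometry). -/
def toE {N : ℕ} (M : Matrix (Fin N) (Fin N) ℂ) : EuclideanSpace ℂ (Fin N × Fin N) :=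
  (WithLp.equiv 2 _).symm (fun p => M p.1 p.2)

lemma toE_sub {N : ℕ} (A B : Matrix (Fin N) (Fin N) ℂ) : toE (A - B) = toE A - toE B := rfl

lemma inner_toE {N : ℕ} (A B : Matrix (Fin N) (Fin N) ℂ) :
    (inner ℂ (toE A) (toE B) : ℂ) = (B * Aᴴ).trace := by
  simp [toE, PiLp.inner_apply, RCLike.inner_apply, Matrix.trace, Matrix.mul_apply,
    Matrix.conjTranspose_apply, Fintype.sum_prod_type, Matrix.diag, mul_comm]

lemma trace_sub_mul {N : ℕ} {A B : Matrix (Fin N) (Fin N) ℂ}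
    (hA : A ∈ Matrix.unitaryGroup (Fin N) ℂ) (hB : B ∈ Matrix.unitaryGroup (Fin N) ℂ) :
    ((A - B) * (A - B)ᴴ).trace
      = 2 * N - ((A * Bᴴ).trace + star ((A * Bᴴ).trace)) := by
  have hA1 : A * Aᴴ = 1 := by
    simpa [Matrix.star_eq_conjTranspose] using (Matrix.mem_unitaryGroup_iff.mp hA)
  have hB1 : B * Bᴴ = 1 := by
    simpa [Matrix.star_eq_conjTranspose] using (Matrix.mem_unitaryGroup_iff.mp hB)
  have hexp : (A - B) * (A - B)ᴴ = 1 + 1 - (A * Bᴴ + (A * Bᴴ)ᴴ) := by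
    rw [Matrix.conjTranspose_sub, Matrix.sub_mul, Matrix.mul_sub, Matrix.mul_sub,
      hA1, hB1, Matrix.conjTranspose_mul, Matrix.conjTranspose_conjTranspose]
    abel
  rw [hexp]
  rw [Matrix.trace_sub, Matrix.trace_add, Matrix.trace_add, Matrix.trace_one,
    Matrix.trace_conjTranspose]
  simp [Fintype.card_fin]
  ring

variable {Ω : Type*} [MeasurableSpace Ω] {P : Measure Ω} [IsProbabilityMeasure P] {N : ℕ}

lemma measurable_entry {A : Ω → Matrix (Fin N) (Fin N) ℂ} (hA : Measurable A) (i j : Fin N) :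
    Measurable fun ω => A ω i j :=
  (measurable_pi_apply j).comp ((measurable_pi_apply i).comp hA)

lemma measurable_mat_sub {A B : Ω → Matrix (Fin N) (Fin N) ℂ}
    (hA : Measurable A) (hB : Measurable B) :
    Measurable fun ω => A ω - B ω := by
  refine measurable_pi_lambda _ fun i => measurable_pi_lambda _ fun j => ?_
  exact (measurable_entry hA i j).sub (measurable_entry hB i j)

lemma aestronglyMeasurable_toE {A : Ω → Matrix (Fin N) (Fin N) ℂ} (hA : Measurable A) :
    AEStronglyMeasurable (fun ω => toE (A ω)) P := by
  have h0 : Measurable fun ω => (fun p : Fin N × Fin N => A ω p.1 p.2) :=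
    measurable_pi_lambda _ fun p => measurable_entry hA p.1 p.2
  have hcont : Continuous fun f : Fin N × Fin N → ℂ =>
      ((WithLp.equiv 2 (Fin N × Fin N → ℂ)).symm f : EuclideanSpace ℂ (Fin N × Fin N)) :=
    (PiLp.continuousLinearEquiv 2 ℂ (fun _ : Fin N × Fin N => ℂ)).symm.continuous
  exact (hcont.comp_stronglyMeasurable h0.stronglyMeasurable).aestronglyMeasurable

lemma memLp_toE_sub {A B : Ω → Matrix (Fin N) (Fin N) ℂ}
    (hA : Measurable A) (hB : Measurable B)
    (hAu : ∀ ω, A ω ∈ Matrix.unitaryGroup (Fin N) ℂ)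
    (hBu : ∀ ω, B ω ∈ Matrix.unitaryGroup (Fin N) ℂ) :
    MemLp (fun ω => toE (A ω - B ω)) 2 P := by
  refine MemLp.of_bound (aestronglyMeasurable_toE (measurable_mat_sub hA hB)) (2 * N)
    (Filter.Eventually.of_forall fun ω => ?_)
  have hent : ∀ p : Fin N × Fin N, ‖(A ω - B ω) p.1 p.2‖ ≤ 2 := by
    intro p
    calc ‖(A ω - B ω) p.1 p.2‖ = ‖A ω p.1 p.2 - B ω p.1 p.2‖ := by simp [Matrix.sub_apply]
      _ ≤ ‖A ω p.1 p.2‖ + ‖B ω p.1 p.2‖ := norm_sub_le _ _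
      _ ≤ 1 + 1 := add_le_add (entry_norm_bound_of_unitary (hAu ω) _ _)
            (entry_norm_bound_of_unitary (hBu ω) _ _)
      _ = 2 := by norm_num
  have hnorm : ‖toE (A ω - B ω)‖
      = Real.sqrt (∑ p : Fin N × Fin N, ‖(A ω - B ω) p.1 p.2‖ ^ 2) := by
    rw [EuclideanSpace.norm_eq]
    rfl
  rw [hnorm]
  calc Real.sqrt (∑ p : Fin N × Fin N, ‖(A ω - B ω) p.1 p.2‖ ^ 2)
      ≤ Real.sqrt (∑ _p : Fin N × Fin N, (2 : ℝ) ^ 2) := by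
        apply Real.sqrt_le_sqrt
        apply Finset.sum_le_sum
        intro p _
        have := hent p
        nlinarith [norm_nonneg ((A ω - B ω) p.1 p.2)]
    _ = 2 * N := by
        rw [Finset.sum_const]
        simp only [Finset.card_univ, Fintype.card_prod, Fintype.card_fin, nsmul_eq_mul]
        rw [show ((N * N : ℕ) : ℝ) * (2:ℝ)^2 = (2 * N)^2 by push_cast; ring]
        exact Real.sqrt_sq (by positivity)

lemma integrable_trace_mul {A B : Ω → Matrix (Fin N) (Fin N) ℂ}
    (hA : Measurable A) (hB : Measurable B)
    (hAu : ∀ ω, A ω ∈ Matrix.unitaryGroup (Fin N) ℂ)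
    (hBu : ∀ ω, B ω ∈ Matrix.unitaryGroup (Fin N) ℂ) :
    Integrable (fun ω => (A ω * (B ω)ᴴ).trace) P := by
  have hWu : ∀ ω, A ω * (B ω)ᴴ ∈ Matrix.unitaryGroup (Fin N) ℂ := fun ω => by
    have := mul_mem (hAu ω) (Unitary.star_mem (hBu ω))
    simpa [Matrix.star_eq_conjTranspose] using this
  have hmeas : Measurable fun ω => (A ω * (B ω)ᴴ).trace := by
    simp only [Matrix.trace, Matrix.diag, Matrix.mul_apply, Matrix.conjTranspose_apply]
    refine Finset.measurable_sum _ fun i _ => Finset.measurable_sum _ fun j _ => ?_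
    exact (measurable_entry hA i j).mul
      (continuous_star.measurable.comp (measurable_entry hB i j))
  refine memLp_one_iff_integrable.mp
    (MemLp.of_bound hmeas.aestronglyMeasurable (N : ℝ)
      (Filter.Eventually.of_forall fun ω => ?_))
  have h1 : (A ω * (B ω)ᴴ).trace = ∑ i, (A ω * (B ω)ᴴ) i i := rfl
  rw [h1]
  calc ‖∑ i, (A ω * (B ω)ᴴ) i i‖ ≤ ∑ i, ‖(A ω * (B ω)ᴴ) i i‖ := norm_sum_le _ _
    _ ≤ ∑ _i : Fin N, (1 : ℝ) :=
        Finset.sum_le_sum fun i _ => entry_norm_bound_of_unitary (hWu ω) i i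
    _ = N := by simp

lemma norm_toLp_eq (P : Measure Ω) [IsProbabilityMeasure P] (hN : 1 ≤ N)
    {A B : Ω → Matrix (Fin N) (Fin N) ℂ} (hA : Measurable A) (hB : Measurable B)
    (hAu : ∀ ω, A ω ∈ Matrix.unitaryGroup (Fin N) ℂ)
    (hBu : ∀ ω, B ω ∈ Matrix.unitaryGroup (Fin N) ℂ)
    (h2 : MemLp (fun ω => toE (A ω - B ω)) 2 P) :
    ‖h2.toLp _‖
      = Real.sqrt (2 * N * (1 - (∫ ω, (A ω * (B ω)ᴴ).trace / (N : ℂ) ∂P).re)) := by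
  have hNpos : (0 : ℝ) < N := by exact_mod_cast hN
  have hT : Integrable (fun ω => (A ω * (B ω)ᴴ).trace) P :=
    integrable_trace_mul hA hB hAu hBu
  set I : ℂ := ∫ ω, (A ω * (B ω)ᴴ).trace ∂P with hI
  have hinner : (inner ℂ (h2.toLp _) (h2.toLp _) : ℂ)
      = ∫ ω, ((2 * N : ℂ) - ((A ω * (B ω)ᴴ).trace + star ((A ω * (B ω)ᴴ).trace))) ∂P := by
    rw [MeasureTheory.L2.inner_def]
    refine integral_congr_ae ?_
    filter_upwards [h2.coeFn_toLp] with ω hω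
    rw [hω, inner_toE]
    exact trace_sub_mul (hAu ω) (hBu ω)
  have hTstar : Integrable (fun ω => star ((A ω * (B ω)ᴴ).trace)) P :=
    hT.norm.mono' (continuous_star.comp_aestronglyMeasurable hT.aestronglyMeasurable)
      (Filter.Eventually.of_forall fun ω => by simp)
  have hstarint : (∫ ω, star ((A ω * (B ω)ᴴ).trace) ∂P) = star I := by
    simp only [RCLike.star_def]
    exact integral_conj
  have hTsum : Integrable (fun ω => (A ω * (B ω)ᴴ).trace + star ((A ω * (B ω)ᴴ).trace)) P :=
    hT.add hTstar
  have hval : (inner ℂ (h2.toLp _) (h2.toLp _) : ℂ) = (2 * N : ℂ) - (I + star I) := by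
    rw [hinner, integral_sub (integrable_const _) hTsum, integral_add hT hTstar,
      hstarint, integral_const]
    simp [hI]
  have hc : (∫ ω, (A ω * (B ω)ᴴ).trace / (N : ℂ) ∂P).re = I.re / N := by
    rw [integral_div, ← hI, Complex.div_natCast_re]
  rw [norm_eq_sqrt_re_inner (𝕜 := ℂ)]
  congr 1
  rw [hval, hc]
  have hre : RCLike.re ((2 * N : ℂ) - (I + star I)) = 2 * N - 2 * I.re := by
    simp only [RCLike.star_def, RCLike.re_to_complex, Complex.sub_re, Complex.add_re,
      Complex.conj_re]
    simp
    ring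
  rw [hre]
  have hN0 : (N : ℝ) ≠ 0 := by positivity
  field_simp

end DefectAux

/-- The inequality `|Ψ(α) − Ψ(β)| ≤ Ψ(αβ⁻¹)` for the defect functional
`Ψ(α) = √(1 − Re E[tr H_α])` on random unitary matrices. -/
theorem defect_difference_bound {Ω : Type*} [MeasurableSpace Ω] (P : Measure Ω)
    [IsProbabilityMeasure P] (N : ℕ) (hN : 1 ≤ N)
    (U V : Ω → Matrix (Fin N) (Fin N) ℂ) (hU : Measurable U) (hV : Measurable V)
    (hUu : ∀ ω, U ω ∈ Matrix.unitaryGroup (Fin N) ℂ)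
    (hVu : ∀ ω, V ω ∈ Matrix.unitaryGroup (Fin N) ℂ) :
    |Real.sqrt (1 - (∫ ω, (U ω).trace / (N : ℂ) ∂P).re) -
        Real.sqrt (1 - (∫ ω, (V ω).trace / (N : ℂ) ∂P).re)| ≤
      Real.sqrt (1 - (∫ ω, (U ω * (V ω)ᴴ).trace / (N : ℂ) ∂P).re) := by
  have h1u : ∀ _ω : Ω, (1 : Matrix (Fin N) (Fin N) ℂ) ∈ Matrix.unitaryGroup (Fin N) ℂ :=
    fun _ => one_mem _
  have hX : MemLp (fun ω => toE (U ω - 1)) 2 P := memLp_toE_sub hU measurable_const hUu h1u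
  have hY : MemLp (fun ω => toE (V ω - 1)) 2 P := memLp_toE_sub hV measurable_const hVu h1u
  have hXY : MemLp (fun ω => toE (U ω - V ω)) 2 P := memLp_toE_sub hU hV hUu hVu
  have hfX := norm_toLp_eq P hN hU measurable_const hUu h1u hX
  have hfY := norm_toLp_eq P hN hV measurable_const hVu h1u hY
  have hfXY := norm_toLp_eq P hN hU hV hUu hVu hXY
  simp only [Matrix.conjTranspose_one, mul_one] at hfX hfY
  have hfun : ∀ ω : Ω, toE (U ω - 1) - toE (V ω - 1) = toE (U ω - V ω) := fun ω => by
    rw [← toE_sub]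
    congr 1
    abel
  have hsub : hX.toLp _ - hY.toLp _ = hXY.toLp _ := by
    rw [← MemLp.toLp_sub hX hY]
    exact MemLp.toLp_congr (hX.sub hY) hXY
      (Filter.Eventually.of_forall fun ω => by simpa [Pi.sub_apply] using hfun ω)
  have key := abs_norm_sub_norm_le (hX.toLp _) (hY.toLp _)
  rw [hsub, hfX, hfY, hfXY] at key
  have hNpos : (0 : ℝ) < N := by exact_mod_cast hN
  have h2N0 : (0 : ℝ) ≤ 2 * N := by positivity
  rw [Real.sqrt_mul h2N0, Real.sqrt_mul h2N0, Real.sqrt_mul h2N0, ← mul_sub, abs_mul,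
    abs_of_nonneg (Real.sqrt_nonneg _)] at key
  have h2Npos : 0 < Real.sqrt (2 * N) := Real.sqrt_pos.mpr (by linarith)
  exact le_of_mul_le_mul_left key h2Npos
end

section
/- Let μ be a Borel probability measure on ℝ with compact support, let z ∈ ℂ satisfy dist(z, supp μ) ≥ 1, and let α ≥ 2 be real. Write Log for the principal branch of the complex logarithm. Then |α ∫_ℝ Log(1 + 1/(α(z − x))) μ(dx)| ≤ 2 and |α ∫_ℝ Log(1 + 1/(α(z − x))) μ(dx) − ∫_ℝ (1/(z − x)) μ(dx)| ≤ 1/α. -/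
open MeasureTheory

lemma regularized_stieltjes_pointwise {α : ℝ} (hα : 2 ≤ α) {u : ℂ}
    (hu : 1 ≤ ‖u‖) :
    ‖(α : ℂ) * Complex.log (1 + 1 / ((α : ℂ) * u))‖ ≤ 2 ∧
    ‖(α : ℂ) * Complex.log (1 + 1 / ((α : ℂ) * u)) - 1 / u‖ ≤ 1 / α := by
  have hα0 : (0 : ℝ) < α := by linarith
  have hu0 : (0 : ℝ) < ‖u‖ := by linarith
  have huz : u ≠ 0 := by
    intro h; simp [h] at hu0
  have hαz : (α : ℂ) ≠ 0 := by
    exact_mod_cast ne_of_gt hα0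
  set w : ℂ := 1 / ((α : ℂ) * u) with hw
  have hwabs : ‖w‖ = 1 / (α * ‖u‖) := by
    simp [hw, norm_mul, Complex.norm_real, Real.norm_eq_abs, abs_of_pos hα0]
  have hwle : ‖w‖ ≤ 1 / 2 := by
    rw [hwabs]
    apply div_le_div_of_nonneg_left (by norm_num) (by norm_num)
    calc (2 : ℝ) = 2 * 1 := by ring
    _ ≤ α * ‖u‖ := by gcongr
  have hwlt : ‖w‖ < 1 := lt_of_le_of_lt (by exact_mod_cast hwle) (by norm_num)
  constructor
  · have h1 : ‖Complex.log (1 + w)‖ ≤ (3 / 2) * ‖w‖ :=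
      Complex.norm_log_one_add_half_le_self (by exact_mod_cast hwle)
    rw [norm_mul, Complex.norm_real, Real.norm_eq_abs, abs_of_pos hα0]
    calc α * ‖Complex.log (1 + w)‖ ≤ α * ((3 / 2) * ‖w‖) := by
          exact mul_le_mul_of_nonneg_left h1 (le_of_lt hα0)
    _ = (3 / 2) * (1 / ‖u‖) := by rw [hwabs]; field_simp
    _ ≤ (3 / 2) * 1 := by
          apply mul_le_mul_of_nonneg_left _ (by norm_num)
          rw [div_le_one hu0]; exact hu
    _ ≤ 2 := by norm_num
  · have hαw : (α : ℂ) * w = 1 / u := by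
      rw [hw]; field_simp
    have h2 : ‖Complex.log (1 + w) - w‖ ≤ ‖w‖ ^ 2 * (1 - ‖w‖)⁻¹ / 2 :=
      Complex.norm_log_one_add_sub_self_le hwlt
    have h3 : (1 - ‖w‖)⁻¹ ≤ 2 := by
      rw [inv_le_comm₀ (by linarith) (by norm_num)]
      linarith
    have h4 : ‖Complex.log (1 + w) - w‖ ≤ ‖w‖ ^ 2 := by
      calc ‖Complex.log (1 + w) - w‖ ≤ ‖w‖ ^ 2 * (1 - ‖w‖)⁻¹ / 2 := h2
      _ ≤ ‖w‖ ^ 2 * 2 / 2 := by gcongr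
      _ = ‖w‖ ^ 2 := by ring
    have : (α : ℂ) * Complex.log (1 + w) - 1 / u = (α : ℂ) * (Complex.log (1 + w) - w) := by
      rw [mul_sub, hαw]
    rw [this, norm_mul, Complex.norm_real, Real.norm_eq_abs, abs_of_pos hα0]
    calc α * ‖Complex.log (1 + w) - w‖ ≤ α * ‖w‖ ^ 2 := by
          exact mul_le_mul_of_nonneg_left h4 (le_of_lt hα0)
    _ = α * (1 / (α * ‖u‖)) ^ 2 := by rw [hwabs]
    _ = 1 / (α * ‖u‖ ^ 2) := by field_simp
    _ ≤ 1 / α := by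
          apply one_div_le_one_div_of_le hα0
          nlinarith [mul_le_mul hu hu (by norm_num : (0:ℝ) ≤ 1) (le_of_lt hu0)]

/-- Estimates for the exponentially regularized Stieltjes transform
`G^α_μ(z) = α ∫ Log(1 + 1/(α(z − x))) μ(dx)` of a compactly supported probability measure,
when `z` is at distance at least `1` from the support and `α ≥ 2`. -/
theorem regularized_stieltjes_estimates (μ : Measure ℝ) [IsProbabilityMeasure μ]
    (K : Set ℝ) (hK : IsCompact K) (hKfull : μ Kᶜ = 0)
    (z : ℂ) (hz : ∀ x ∈ K, 1 ≤ dist z (x : ℂ)) (α : ℝ) (hα : 2 ≤ α) :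
    ‖((α : ℂ) * ∫ x, Complex.log (1 + 1 / ((α : ℂ) * (z - (x : ℂ)))) ∂μ)‖ ≤ 2 ∧
    ‖((α : ℂ) * (∫ x, Complex.log (1 + 1 / ((α : ℂ) * (z - (x : ℂ)))) ∂μ) -
        ∫ x, 1 / (z - (x : ℂ)) ∂μ)‖ ≤ 1 / α := by
  have hα0 : (0 : ℝ) < α := by linarith
  have hae : ∀ᵐ x ∂μ, x ∈ K := by
    rw [MeasureTheory.ae_iff]
    exact hKfull
  have hdist : ∀ x ∈ K, 1 ≤ ‖z - (x : ℂ)‖ := fun x hx => by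
    have := hz x hx
    rwa [Complex.dist_eq] at this
  set f : ℝ → ℂ := fun x => Complex.log (1 + 1 / ((α : ℂ) * (z - (x : ℂ)))) with hf
  set g : ℝ → ℂ := fun x => 1 / (z - (x : ℂ)) with hg
  have hfmeas : AEStronglyMeasurable f μ := by
    apply Measurable.aestronglyMeasurable
    apply Complex.measurable_log.comp
    fun_prop
  have hgmeas : AEStronglyMeasurable g μ := by
    apply Measurable.aestronglyMeasurable
    fun_prop
  have hafmeas : AEStronglyMeasurable (fun x => (α : ℂ) * f x) μ :=
    hfmeas.const_mul _
  -- pointwise bounds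
  have hb1 : ∀ᵐ x ∂μ, ‖(α : ℂ) * f x‖ ≤ 2 := by
    filter_upwards [hae] with x hx
    exact (regularized_stieltjes_pointwise hα (hdist x hx)).1
  have hb2 : ∀ᵐ x ∂μ, ‖(α : ℂ) * f x - g x‖ ≤ 1 / α := by
    filter_upwards [hae] with x hx
    exact (regularized_stieltjes_pointwise hα (hdist x hx)).2
  have hgb : ∀ᵐ x ∂μ, ‖g x‖ ≤ 1 := by
    filter_upwards [hae] with x hx
    have h1 := hdist x hx
    have : ‖g x‖ = 1 / ‖z - (x : ℂ)‖ := by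
      simp [hg]
    rw [this]
    rw [div_le_one (by linarith)]
    exact h1
  have hfint : Integrable (fun x => (α : ℂ) * f x) μ :=
    ⟨hafmeas, HasFiniteIntegral.of_bounded hb1⟩
  have hgint : Integrable g μ := ⟨hgmeas, HasFiniteIntegral.of_bounded hgb⟩
  have hmul : (α : ℂ) * ∫ x, f x ∂μ = ∫ x, (α : ℂ) * f x ∂μ :=
    (integral_const_mul _ _).symm
  constructor
  · rw [hmul]
    calc ‖∫ x, (α : ℂ) * f x ∂μ‖ ≤ 2 * (μ Set.univ).toReal :=
        norm_integral_le_of_norm_le_const hb1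
    _ = 2 := by simp
  · rw [hmul, ← integral_sub hfint hgint]
    calc ‖∫ x, ((α : ℂ) * f x - g x) ∂μ‖ ≤ (1 / α) * (μ Set.univ).toReal :=
        norm_integral_le_of_norm_le_const hb2
    _ = 1 / α := by simp
end

section
/- Let r > 0, let g : ℂ → ℂ be holomorphic on {z ∈ ℂ : |z| > r} with g(z) → 0 as |z| → ∞, and let z₀ ∈ ℂ with |z₀| ≤ r. Then for every R > r, (1/(2πi)) ∮_{|z|=R} e^{g(z)} / (z − z₀) dz = 1, where the contour integral is over the positively oriented circle of radius R centred at 0. -/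
open Complex Filter Metric Set

/-- Contour evaluation `(1/2πi) ∮ e^{g(z)}/(z − z₀) dz = 1` for a function `g` holomorphic
outside a disc and vanishing at infinity. -/
theorem contour_exp_vanishing_at_infty (r : ℝ) (hr : 0 < r) (g : ℂ → ℂ)
    (hg : DifferentiableOn ℂ g {z : ℂ | r < ‖z‖})
    (hg0 : Filter.Tendsto g (Bornology.cobounded ℂ) (nhds 0))
    (z₀ : ℂ) (hz₀ : ‖z₀‖ ≤ r) (R : ℝ) (hR : r < R) :
    (1 / (2 * (Real.pi : ℂ) * Complex.I)) *
        (∮ z in C(0, R), Complex.exp (g z) / (z - z₀)) = 1 := by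
  have hR0 : 0 < R := hr.trans hR
  have hopen : IsOpen {z : ℂ | r < ‖z‖} :=
    isOpen_lt continuous_const continuous_norm
  have hne : ∀ z : ℂ, r < ‖z‖ → z - z₀ ≠ 0 := by
    intro z hz hzz
    have : z = z₀ := sub_eq_zero.mp hzz
    subst this
    exact absurd hz₀ (not_le.mpr hz)
  set h : ℂ → ℂ := fun z => (Complex.exp (g z) - 1) / (z - z₀) with hh
  have hdh : DifferentiableOn ℂ h {z : ℂ | r < ‖z‖} := by
    apply DifferentiableOn.div
    · exact (hg.cexp).sub (differentiableOn_const 1)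
    · exact (differentiableOn_id.sub (differentiableOn_const z₀))
    · intro z hz; exact hne z hz
  have hsub : ∀ R' : ℝ, R ≤ R' → (sphere (0:ℂ) R') ⊆ {z : ℂ | r < ‖z‖} := by
    intro R' hRR' z hz
    simp only [mem_sphere_iff_norm, sub_zero] at hz
    simp only [mem_setOf_eq, hz]
    linarith
  have hconst : ∀ R' : ℝ, R ≤ R' → (∮ z in C(0, R'), h z) = ∮ z in C(0, R), h z := by
    intro R' hRR'
    apply circleIntegral_eq_of_differentiable_on_annulus_off_countable hR0 hRR'
      Set.countable_empty
    · apply hdh.continuousOn.mono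
      intro z hz
      simp only [mem_diff, mem_closedBall, mem_ball, dist_zero_right] at hz
      simp only [mem_setOf_eq]
      linarith [hz.2]
    · intro z hz
      simp only [mem_diff, mem_ball, mem_closedBall, dist_zero_right,
        mem_empty_iff_false] at hz
      have hzmem : z ∈ {z : ℂ | r < ‖z‖} := by
        simp only [mem_setOf_eq]
        linarith [hz.1.2]
      exact hdh.differentiableAt (hopen.mem_nhds hzmem)
  have hexp1 : Filter.Tendsto (fun z => Complex.exp (g z) - 1) (Bornology.cobounded ℂ)
      (nhds 0) := by
    have h1 : Filter.Tendsto (fun z => Complex.exp (g z)) (Bornology.cobounded ℂ)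
        (nhds 1) := by
      have := (Complex.continuous_exp.tendsto 0).comp hg0
      simpa [Function.comp_def] using this
    simpa using h1.sub (tendsto_const_nhds (x := (1:ℂ)))
  have key : ∀ ε : ℝ, 0 < ε → ‖∮ z in C(0, R), h z‖ ≤ 4 * Real.pi * ε := by
    intro ε hε
    have hev : ∀ᶠ z in Bornology.cobounded ℂ, ‖Complex.exp (g z) - 1‖ ≤ ε := by
      have h2 := hexp1
      rw [Metric.tendsto_nhds] at h2
      filter_upwards [h2 ε hε] with z hz
      rw [dist_zero_right] at hz
      exact hz.le
    rw [← comap_norm_atTop, Filter.eventually_comap, Filter.eventually_atTop] at hev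
    obtain ⟨M, hM⟩ := hev
    set R' : ℝ := max (max R (2 * r)) M + 1 with hR'
    have hRR' : R ≤ R' := le_trans (le_max_of_le_left (le_max_left _ _)) (by linarith)
    have hMR' : M ≤ R' := le_trans (le_max_right _ _) (by linarith)
    have h2r : 2 * r ≤ R' := le_trans (le_max_of_le_left (le_max_right _ _)) (by linarith)
    have hR'pos : 0 < R' := lt_of_lt_of_le hR0 hRR'
    rw [← hconst R' hRR']
    have hbound : ∀ z ∈ sphere (0:ℂ) R', ‖h z‖ ≤ ε / (R' / 2) := by
      intro z hz
      simp only [mem_sphere_iff_norm, sub_zero] at hz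
      have h1 : ‖Complex.exp (g z) - 1‖ ≤ ε := hM ‖z‖ (hz ▸ hMR') z rfl
      have h2 : R' / 2 ≤ ‖z - z₀‖ := by
        have h3 : ‖z‖ - ‖z₀‖ ≤ ‖z - z₀‖ := norm_sub_norm_le z z₀
        have hz₀' : ‖z₀‖ ≤ r := by exact hz₀
        rw [hz] at h3
        linarith
      have hd0 : (0:ℝ) < R' / 2 := by linarith
      rw [hh]
      simp only [norm_div]
      exact div_le_div₀ hε.le h1 hd0 h2
    have hb := circleIntegral.norm_integral_le_of_norm_le_const (R := R') (c := (0:ℂ))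
      hR'pos.le hbound
    calc ‖∮ z in C(0, R'), h z‖ ≤ 2 * Real.pi * R' * (ε / (R' / 2)) := hb
      _ = 4 * Real.pi * ε := by field_simp; ring
  have hI : (∮ z in C(0, R), h z) = 0 := by
    rw [← norm_eq_zero]
    by_contra hne0
    have hpos : 0 < ‖∮ z in C(0, R), h z‖ :=
      lt_of_le_of_ne (norm_nonneg _) (Ne.symm hne0)
    have hεpos : 0 < ‖∮ z in C(0, R), h z‖ / (8 * Real.pi) :=
      div_pos hpos (by positivity)
    have hk := key _ hεpos
    have hπ : 0 < Real.pi := Real.pi_pos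
    have heq2 : 4 * Real.pi * (‖∮ z in C(0, R), h z‖ / (8 * Real.pi)) =
        ‖∮ z in C(0, R), h z‖ / 2 := by field_simp; ring
    rw [heq2] at hk
    linarith
  -- integrability
  have hcont_inv : ContinuousOn (fun z : ℂ => (z - z₀)⁻¹) (sphere 0 R) := by
    apply ContinuousOn.inv₀
    · exact (continuous_id.sub continuous_const).continuousOn
    · intro z hz
      exact hne z (hsub R le_rfl hz)
  have hint1 : CircleIntegrable (fun z : ℂ => (z - z₀)⁻¹) 0 R :=
    hcont_inv.circleIntegrable hR0.le
  have hinth : CircleIntegrable h 0 R :=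
    (hdh.continuousOn.mono (hsub R le_rfl)).circleIntegrable hR0.le
  have heq : ∀ z : ℂ, Complex.exp (g z) / (z - z₀) = (z - z₀)⁻¹ + h z := by
    intro z
    rw [hh, inv_eq_one_div, ← add_div]
    congr 1
    ring
  have hball : z₀ ∈ ball (0:ℂ) R := by
    simp only [mem_ball, dist_zero_right]
    exact lt_of_le_of_lt hz₀ hR
  have hintf : CircleIntegrable (fun z : ℂ => Complex.exp (g z) / (z - z₀)) 0 R := by
    apply ContinuousOn.circleIntegrable hR0.le
    exact ((hg.continuousOn.mono (hsub R le_rfl)).cexp).div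
      ((continuous_id.sub continuous_const).continuousOn)
      (fun z hz => hne z (hsub R le_rfl hz))
  have hmain : (∮ z in C(0, R), Complex.exp (g z) / (z - z₀)) =
      2 * Real.pi * Complex.I := by
    have hstep : (∮ z in C(0, R), (z - z₀)⁻¹) =
        (∮ z in C(0, R), Complex.exp (g z) / (z - z₀)) - ∮ z in C(0, R), h z := by
      calc (∮ z in C(0, R), (z - z₀)⁻¹)
          = ∮ z in C(0, R), (Complex.exp (g z) / (z - z₀) - h z) := by
            apply circleIntegral.integral_congr hR0.le
            intro z _
            simp only
            rw [heq z]; ring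
        _ = (∮ z in C(0, R), Complex.exp (g z) / (z - z₀)) - ∮ z in C(0, R), h z :=
            circleIntegral.integral_sub hintf hinth
    rw [circleIntegral.integral_sub_inv_of_mem_ball hball, hI, sub_zero] at hstep
    exact hstep.symm
  rw [hmain]
  have hπ : (Real.pi : ℂ) ≠ 0 := Complex.ofReal_ne_zero.mpr Real.pi_ne_zero
  field_simp
end
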